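/- arXiv:1105.1074 — 4 statements merged into one kernel-verified Lean document; each statement's English description precedes it below -/
import Mathlib

section
/- Let W be a real symmetric m×m matrix satisfying 1ᵀW = 1ᵀ, W1 = 1 and ρ(W − 11ᵀ/m) < 1, let λ₂ := ρ(W − 11ᵀ/m) and let λ_min denote the smallest eigenvalue of W. Let z₀ ∈ ℝᵐ be deterministic, let n be a positive integer, let S₀, S₁, S₂, … be positive reals, and let ε₀, ε₁, ε₂, … be random vectors in ℝᵐ whose components ε_s(i) (over all s and i) are jointly independent real random variables with mean zero and variance at most (S_s/2ⁿ)²/12. Define ẑ_t := Wᵗz₀ + Σ_{s=0}^{t−1} Wˢ(W−I)ε_{t−s−1} + ε_t and z_{t+1} := W^{t+1}z₀ + Σ_{s=0}^{t} Wˢ(W−I)ε_{t−s}. Then for every t ≥ 1, E[‖z_{t+1} − ẑ_t‖²] ≤ ‖z₀‖²·λ₂^{2t}·(1−λ_min)² + (1−λ_min)²·Σ_{s=0}^{t−1} ‖Wˢ(W−I)‖²·m·S_{t−s−1}²/(2^{2n}·12) + (2−λ_min)²·m·S_t²/(2^{2n}·12), where matrix norms are spectral (operator 2-)norms and vector norms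 are Euclidean. -/
open Matrix Finset MeasureTheory ProbabilityTheory

/-- The m×m averaging matrix `11ᵀ/m`. -/
noncomputable def avgMat (m : ℕ) : Matrix (Fin m) (Fin m) ℝ := Matrix.of fun _ _ => (1 : ℝ) / m

/-- The spectral (operator 2-)norm of a real square matrix. -/
noncomputable def spNorm {m : ℕ} (M : Matrix (Fin m) (Fin m) ℝ) : ℝ :=
  ‖Matrix.toEuclideanCLM (𝕜 := ℝ) M‖

/-- The Euclidean norm of a vector in `ℝᵐ`. -/
noncomputable def eucNorm {m : ℕ} (v : Fin m → ℝ) : ℝ := Real.sqrt (∑ i, v i ^ 2)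

lemma isHermitian_of_isSymm {m : ℕ} {M : Matrix (Fin m) (Fin m) ℝ} (h : M.IsSymm) :
    M.IsHermitian := by
  rw [Matrix.IsHermitian, Matrix.conjTranspose]
  ext i j; simpa using h.apply i j

lemma spNorm_nonneg {m : ℕ} (M : Matrix (Fin m) (Fin m) ℝ) : 0 ≤ spNorm M := norm_nonneg _

lemma spNorm_mul_le {m : ℕ} (M N : Matrix (Fin m) (Fin m) ℝ) :
    spNorm (M * N) ≤ spNorm M * spNorm N := by
  simp only [spNorm, _root_.map_mul]
  exact ContinuousLinearMap.opNorm_comp_le _ _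

lemma spNorm_pow_le {m : ℕ} (M : Matrix (Fin m) (Fin m) ℝ) (k : ℕ) :
    spNorm (M ^ k) ≤ spNorm M ^ k := by
  induction k with
  | zero =>
      simp only [pow_zero, spNorm, _root_.map_one]
      exact ContinuousLinearMap.norm_id_le
  | succ k ih =>
      rw [pow_succ, pow_succ]
      calc spNorm (M ^ k * M) ≤ spNorm (M ^ k) * spNorm M := spNorm_mul_le _ _
        _ ≤ spNorm M ^ k * spNorm M :=
            mul_le_mul_of_nonneg_right ih (spNorm_nonneg _)

lemma eucNorm_nonneg {m : ℕ} (v : Fin m → ℝ) : 0 ≤ eucNorm v := Real.sqrt_nonneg _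

lemma eucNorm_sq {m : ℕ} (v : Fin m → ℝ) : eucNorm v ^ 2 = ∑ i, v i ^ 2 := by
  rw [eucNorm, Real.sq_sqrt (by positivity)]

lemma eucNorm_eq_norm {m : ℕ} (v : Fin m → ℝ) :
    eucNorm v = ‖(WithLp.equiv 2 (Fin m → ℝ)).symm v‖ := by
  rw [eucNorm, EuclideanSpace.norm_eq]
  congr 1
  refine Finset.sum_congr rfl fun i _ => ?_
  simp [Real.norm_eq_abs, sq_abs]

lemma eucNorm_mulVec_le {m : ℕ} (M : Matrix (Fin m) (Fin m) ℝ) (v : Fin m → ℝ) :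
    eucNorm (M.mulVec v) ≤ spNorm M * eucNorm v := by
  rw [eucNorm_eq_norm, eucNorm_eq_norm, spNorm]
  calc ‖(WithLp.equiv 2 (Fin m → ℝ)).symm (M.mulVec v)‖
      = ‖Matrix.toEuclideanCLM (𝕜 := ℝ) M ((WithLp.equiv 2 (Fin m → ℝ)).symm v)‖ := by
        rfl
    _ ≤ _ := ContinuousLinearMap.le_opNorm _ _

lemma frob_le {m : ℕ} (M : Matrix (Fin m) (Fin m) ℝ) :
    ∑ j, ∑ i, (M i j) ^ 2 ≤ (m : ℝ) * spNorm M ^ 2 := by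
  have hcol : ∀ j, ∑ i, (M i j) ^ 2 ≤ spNorm M ^ 2 := by
    intro j
    have hs : eucNorm ((Pi.single j 1 : Fin m → ℝ)) = 1 := by
      have h0 : ∑ i, ((Pi.single j 1 : Fin m → ℝ)) i ^ 2 = 1 := by
        simp [Pi.single_apply, sq, Finset.sum_ite_eq']
      rw [eucNorm, h0, Real.sqrt_one]
    have h1 : eucNorm (M *ᵥ (Pi.single j 1 : Fin m → ℝ)) ≤ spNorm M := by
      have := eucNorm_mulVec_le M (Pi.single j 1)
      rwa [hs, mul_one] at this
    have h2 : eucNorm (M *ᵥ (Pi.single j 1 : Fin m → ℝ)) ^ 2 = ∑ i, (M i j) ^ 2 := by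
      rw [eucNorm_sq]
      refine Finset.sum_congr rfl fun i _ => ?_
      simp [Matrix.mulVec_single]
    calc ∑ i, (M i j) ^ 2 = eucNorm (M *ᵥ (Pi.single j 1 : Fin m → ℝ)) ^ 2 := h2.symm
      _ ≤ spNorm M ^ 2 := pow_le_pow_left₀ (eucNorm_nonneg _) h1 2
  calc ∑ j, ∑ i, (M i j) ^ 2 ≤ ∑ _j : Fin m, spNorm M ^ 2 :=
        Finset.sum_le_sum fun j _ => hcol j
    _ = (m : ℝ) * spNorm M ^ 2 := by simp [mul_comm]

lemma spNorm_le_of_spectrum {m : ℕ} {M : Matrix (Fin m) (Fin m) ℝ} (hM : M.IsHermitian)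
    {r : ℝ} (hr : 0 ≤ r) (h : ∀ lam ∈ spectrum ℝ M, |lam| ≤ r) : spNorm M ≤ r := by
  rw [spNorm]
  refine ContinuousLinearMap.opNorm_le_bound _ hr fun x => ?_
  set B := hM.eigenvectorBasis with hB
  set T := Matrix.toEuclideanCLM (𝕜 := ℝ) M with hT
  have hTB : ∀ j, T (B j) = hM.eigenvalues j • B j := by
    intro j
    have h1 : M *ᵥ ⇑(B j) = hM.eigenvalues j • ⇑(B j) := hM.mulVec_eigenvectorBasis j
    have h2 : T ((WithLp.equiv 2 (Fin m → ℝ)).symm ⇑(B j)) =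
        (WithLp.equiv 2 (Fin m → ℝ)).symm (Matrix.toLin' M ⇑(B j)) :=
      rfl
    rw [Matrix.toLin'_apply, h1] at h2
    simpa using h2
  have hrepr : ∀ j, B.repr (T x) j = hM.eigenvalues j * B.repr x j := by
    intro j
    have hx : T x = ∑ k, (B.repr x k * hM.eigenvalues k) • B k := by
      conv_lhs => rw [← B.sum_repr x]
      rw [map_sum]
      refine Finset.sum_congr rfl fun k _ => ?_
      rw [_root_.map_smul, hTB k, smul_smul, mul_comm]
    rw [hx, map_sum]
    simp only [_root_.map_smul, B.repr_self]
    rw [WithLp.ofLp_sum, Fintype.sum_apply]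
    simp [EuclideanSpace.single_apply, mul_comm]
  have hnx : ‖x‖ ^ 2 = ∑ j, (B.repr x j) ^ 2 := by
    rw [← B.repr.norm_map x, EuclideanSpace.norm_eq, Real.sq_sqrt (by positivity)]
    simp [sq_abs]
  have hnTx : ‖T x‖ ^ 2 = ∑ j, (hM.eigenvalues j * B.repr x j) ^ 2 := by
    rw [← B.repr.norm_map (T x), EuclideanSpace.norm_eq, Real.sq_sqrt (by positivity)]
    simp [hrepr, sq_abs, mul_pow, abs_mul]
  have hle : ‖T x‖ ^ 2 ≤ (r * ‖x‖) ^ 2 := by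
    rw [hnTx, mul_pow, hnx, Finset.mul_sum]
    refine Finset.sum_le_sum fun j _ => ?_
    have hj := h _ (hM.eigenvalues_mem_spectrum_real j)
    rw [mul_pow]
    have h2 : hM.eigenvalues j ^ 2 ≤ r ^ 2 := by
      rw [← sq_abs]
      exact pow_le_pow_left₀ (abs_nonneg _) hj 2
    exact mul_le_mul_of_nonneg_right h2 (sq_nonneg _)
  have h1 : (0:ℝ) ≤ r * ‖x‖ := mul_nonneg hr (norm_nonneg _)
  nlinarith [norm_nonneg (T x)]

lemma algmap_mulVec {m : ℕ} (lam : ℝ) (v : Fin m → ℝ) :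
    (algebraMap ℝ (Matrix (Fin m) (Fin m) ℝ) lam) *ᵥ v = lam • v := by
  rw [Matrix.algebraMap_eq_diagonal]
  ext i
  simp [Matrix.mulVec_diagonal]

lemma mem_spectrum_iff_eigen {m : ℕ} {M : Matrix (Fin m) (Fin m) ℝ} {lam : ℝ} :
    lam ∈ spectrum ℝ M ↔ ∃ v, v ≠ 0 ∧ M.mulVec v = lam • v := by
  rw [spectrum.mem_iff, Matrix.isUnit_iff_isUnit_det, isUnit_iff_ne_zero, not_not,
    ← Matrix.exists_mulVec_eq_zero_iff]
  constructor
  · rintro ⟨v, hv, hveq⟩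
    refine ⟨v, hv, ?_⟩
    rw [Matrix.sub_mulVec, algmap_mulVec, sub_eq_zero] at hveq
    exact hveq.symm
  · rintro ⟨v, hv, hveq⟩
    refine ⟨v, hv, ?_⟩
    rw [Matrix.sub_mulVec, algmap_mulVec, sub_eq_zero]
    exact hveq.symm

lemma spectrum_le_one {m : ℕ} {W : Matrix (Fin m) (Fin m) ℝ}
    (hcol : Matrix.vecMul (fun _ => (1 : ℝ)) W = fun _ => 1)
    (hρ : spectralRadius ℝ (W - avgMat m) < 1) :
    ∀ lam ∈ spectrum ℝ W, lam ≤ 1 := by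
  intro lam hlam
  obtain ⟨v, hv, hveq⟩ := mem_spectrum_iff_eigen.mp hlam
  have hcols : ∀ j, (∑ i, W i j) = 1 := by
    intro j
    have := congrFun hcol j
    simpa [Matrix.vecMul, dotProduct] using this
  have hsum : lam * ∑ j, v j = ∑ j, v j := by
    calc lam * ∑ j, v j = ∑ i, (lam • v) i := by
          simp [Finset.mul_sum]
      _ = ∑ i, (W *ᵥ v) i := by rw [hveq]
      _ = ∑ j, (∑ i, W i j) * v j := by
          simp only [Matrix.mulVec, dotProduct]
          rw [Finset.sum_comm]
          simp [Finset.sum_mul]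
      _ = ∑ j, v j := by simp [hcols]
  by_cases h1 : lam = 1
  · exact le_of_eq h1
  · have hSv : ∑ j, v j = 0 := by
      rcases mul_eq_zero.mp (by linarith [hsum] : (lam - 1) * ∑ j, v j = 0) with h | h
      · exact absurd (by linarith) h1
      · exact h
    have havg : (avgMat m) *ᵥ v = 0 := by
      ext i
      have : (avgMat m *ᵥ v) i = (∑ j, v j) / m := by
        simp [avgMat, Matrix.mulVec, dotProduct, Finset.sum_div, div_mul_eq_mul_div,
          inv_mul_eq_div]
      rw [this, hSv]
      simp
    have heig : (W - avgMat m) *ᵥ v = lam • v := by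
      rw [Matrix.sub_mulVec, havg, hveq, sub_zero]
    have hmem2 : lam ∈ spectrum ℝ (W - avgMat m) := mem_spectrum_iff_eigen.mpr ⟨v, hv, heig⟩
    have hle : (‖lam‖₊ : ENNReal) ≤ spectralRadius ℝ (W - avgMat m) :=
      le_iSup₂ (f := fun k (_ : k ∈ spectrum ℝ (W - avgMat m)) => (‖k‖₊ : ENNReal)) lam hmem2
    have hlt : (‖lam‖₊ : ENNReal) < 1 := lt_of_le_of_lt hle hρ
    have : |lam| < 1 := by
      rw [← Real.norm_eq_abs, ← coe_nnnorm]
      exact_mod_cast hlt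
    linarith [abs_lt.mp this |>.2]

lemma spectrum_shift {m : ℕ} {W : Matrix (Fin m) (Fin m) ℝ} {r lam : ℝ}
    (h : lam ∈ spectrum ℝ (W - algebraMap ℝ (Matrix (Fin m) (Fin m) ℝ) r)) :
    lam + r ∈ spectrum ℝ W := by
  rw [← spectrum.sub_singleton_eq] at h
  obtain ⟨x, hx, y, hy, hxy⟩ := h
  rcases Set.mem_singleton_iff.mp hy
  have : lam + r = x := by rw [← hxy]; ring
  rwa [this]


section
variable {m : ℕ} {W : Matrix (Fin m) (Fin m) ℝ}

lemma WJ_eq (hrow : W.mulVec (fun _ => (1 : ℝ)) = fun _ => 1) :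
    W * avgMat m = avgMat m := by
  ext i j
  have hr : ∑ k, W i k = 1 := by
    have := congrFun hrow i
    simpa [Matrix.mulVec, dotProduct] using this
  simp only [Matrix.mul_apply, avgMat, Matrix.of_apply]
  simp only [mul_one_div]
  rw [← Finset.sum_div, hr]

lemma JW_eq (hcol : Matrix.vecMul (fun _ => (1 : ℝ)) W = fun _ => 1) :
    avgMat m * W = avgMat m := by
  ext i j
  have hc : ∑ k, W k j = 1 := by
    have := congrFun hcol j
    simpa [Matrix.vecMul, dotProduct] using this
  simp only [Matrix.mul_apply, avgMat, Matrix.of_apply]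
  simp only [div_mul_eq_mul_div, one_mul]
  rw [← Finset.sum_div, hc]

lemma JJ_eq : avgMat m * avgMat m = avgMat m := by
  ext i j
  simp only [Matrix.mul_apply, avgMat, Matrix.of_apply]
  rw [Finset.sum_const, Finset.card_univ, Fintype.card_fin]
  rcases Nat.eq_zero_or_pos m with hm | hm
  · subst hm; exact absurd i.2 (by simp)
  · rw [nsmul_eq_mul]; field_simp

lemma pow_eq_sub_pow_add (hrow : W.mulVec (fun _ => (1 : ℝ)) = fun _ => 1)
    (hcol : Matrix.vecMul (fun _ => (1 : ℝ)) W = fun _ => 1) :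
    ∀ t : ℕ, 1 ≤ t → W ^ t = (W - avgMat m) ^ t + avgMat m := by
  have hJWJ : avgMat m * (W - avgMat m) = 0 := by
    rw [Matrix.mul_sub, JW_eq hcol, JJ_eq, sub_self]
  intro t ht
  induction t with
  | zero => omega
  | succ t ih =>
      rcases Nat.eq_zero_or_pos t with h0 | h0
      · subst h0; simp
      · have hWt := ih h0
        have hJpow : avgMat m * (W - avgMat m) ^ t = 0 := by
          obtain ⟨t', rfl⟩ := Nat.exists_eq_add_of_le h0
          rw [add_comm, pow_succ']
          rw [← mul_assoc, hJWJ, zero_mul]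
        calc W ^ (t + 1) = W * W ^ t := by rw [pow_succ']
          _ = W * ((W - avgMat m) ^ t + avgMat m) := by rw [hWt]
          _ = ((W - avgMat m) + avgMat m) * (W - avgMat m) ^ t + W * avgMat m := by
              rw [Matrix.mul_add, sub_add_cancel]
          _ = (W - avgMat m) ^ (t + 1) + avgMat m := by
              rw [Matrix.add_mul, hJpow, add_zero, WJ_eq hrow, ← pow_succ']

lemma key_factor (hrow : W.mulVec (fun _ => (1 : ℝ)) = fun _ => 1)
    (hcol : Matrix.vecMul (fun _ => (1 : ℝ)) W = fun _ => 1) {t : ℕ} (ht : 1 ≤ t) :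
    (W - 1) * W ^ t = (W - 1) * (W - avgMat m) ^ t := by
  rw [pow_eq_sub_pow_add hrow hcol t ht, Matrix.mul_add]
  have : (W - 1) * avgMat m = 0 := by
    rw [Matrix.sub_mul, WJ_eq hrow, one_mul, sub_self]
  rw [this, add_zero]

end


/-- **Proposition 1.** Let `W` be a real symmetric `m×m` matrix with `1ᵀW = 1ᵀ`,
`W1 = 1` and `ρ(W − 11ᵀ/m) < 1`, let `λ₂ := ρ(W − 11ᵀ/m)` and `λ_min` its smallest eigenvalue.
Let the quantization noise components `ε_s(i)` be jointly independent, zero mean, with variance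
at most `(S_s/2ⁿ)²/12`.  With
`ẑ_t = Wᵗz₀ + Σ_{s=0}^{t−1} Wˢ(W−I)ε_{t−s−1} + ε_t` and
`z_{t+1} = W^{t+1}z₀ + Σ_{s=0}^{t} Wˢ(W−I)ε_{t−s}`, for every `t ≥ 1`:
`E[‖z_{t+1} − ẑ_t‖²] ≤ ‖z₀‖²λ₂^{2t}(1−λ_min)²
  + (1−λ_min)²·Σ_{s=0}^{t−1}‖Wˢ(W−I)‖²·m·S_{t−s−1}²/(2^{2n}·12)
  + (2−λ_min)²·m·S_t²/(2^{2n}·12)`. -/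
theorem prop1_expected_successive_difference_bound {m : ℕ}
    (W : Matrix (Fin m) (Fin m) ℝ) (hsym : W.IsSymm)
    (hcol : Matrix.vecMul (fun _ => (1 : ℝ)) W = fun _ => 1)
    (hrow : W.mulVec (fun _ => (1 : ℝ)) = fun _ => 1)
    (hρ : spectralRadius ℝ (W - avgMat m) < 1)
    (lam2 : ℝ) (hlam2 : lam2 = (spectralRadius ℝ (W - avgMat m)).toReal)
    (lammin : ℝ) (hmem : lammin ∈ spectrum ℝ W)
    (hmin : ∀ μ' ∈ spectrum ℝ W, lammin ≤ μ')
    (z₀ : Fin m → ℝ) (n : ℕ) (hn : 0 < n) (S : ℕ → ℝ) (hS : ∀ s, 0 < S s)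
    {Ω : Type} [MeasurableSpace Ω] (μ : Measure Ω) [IsProbabilityMeasure μ]
    (ε : ℕ → Fin m → Ω → ℝ)
    (hL2 : ∀ s i, MemLp (ε s i) 2 μ)
    (hindep : iIndepFun
      (fun p : ℕ × Fin m => ε p.1 p.2) μ)
    (hmean : ∀ s i, ∫ ω, ε s i ω ∂μ = 0)
    (hvar : ∀ s i, variance (ε s i) μ ≤ (S s / 2 ^ n) ^ 2 / 12)
    (zhat z : ℕ → Ω → Fin m → ℝ)
    (hzhat : ∀ t ω, zhat t ω = (W ^ t).mulVec z₀ +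
        (∑ s ∈ Finset.range t, (W ^ s * (W - 1)).mulVec (fun i => ε (t - s - 1) i ω)) +
        fun i => ε t i ω)
    (hz : ∀ t ω, z (t + 1) ω = (W ^ (t + 1)).mulVec z₀ +
        ∑ s ∈ Finset.range (t + 1), (W ^ s * (W - 1)).mulVec (fun i => ε (t - s) i ω))
    (t : ℕ) (ht : 1 ≤ t) :
    ∫ ω, eucNorm (z (t + 1) ω - zhat t ω) ^ 2 ∂μ ≤
      eucNorm z₀ ^ 2 * lam2 ^ (2 * t) * (1 - lammin) ^ 2 +
      (1 - lammin) ^ 2 *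
        ∑ s ∈ Finset.range t,
          spNorm (W ^ s * (W - 1)) ^ 2 * m * S (t - s - 1) ^ 2 / (2 ^ (2 * n) * 12) +
      (2 - lammin) ^ 2 * m * S t ^ 2 / (2 ^ (2 * n) * 12) := by
  classical
  have hherm : W.IsHermitian := isHermitian_of_isSymm hsym
  have hspec1 : ∀ lam ∈ spectrum ℝ W, lam ≤ 1 := spectrum_le_one hcol hρ
  have hminle1 : lammin ≤ 1 := hspec1 _ hmem
  have hlam2nn : 0 ≤ lam2 := by rw [hlam2]; exact ENNReal.toReal_nonneg
  have hJherm : (avgMat m).IsHermitian := by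
    rw [Matrix.IsHermitian]
    ext i j
    simp [avgMat, Matrix.conjTranspose_apply]
  have hWJherm : (W - avgMat m).IsHermitian := hherm.sub hJherm
  have hnormWJ : spNorm (W - avgMat m) ≤ lam2 := by
    refine spNorm_le_of_spectrum hWJherm hlam2nn fun lam hl => ?_
    have hle : (‖lam‖₊ : ENNReal) ≤ spectralRadius ℝ (W - avgMat m) :=
      le_iSup₂ (f := fun k (_ : k ∈ spectrum ℝ (W - avgMat m)) => (‖k‖₊ : ENNReal)) lam hl
    rw [hlam2]
    have hne : spectralRadius ℝ (W - avgMat m) ≠ ⊤ := (hρ.trans_le le_top).ne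
    calc |lam| = ((‖lam‖₊ : ENNReal)).toReal := by
          simp [← Real.norm_eq_abs, coe_nnnorm]
      _ ≤ _ := ENNReal.toReal_mono hne hle
  have hnormW1 : spNorm (W - 1) ≤ 1 - lammin := by
    refine spNorm_le_of_spectrum (hherm.sub Matrix.isHermitian_one) (by linarith) fun lam hl => ?_
    have h1 : lam + 1 ∈ spectrum ℝ W := by
      apply spectrum_shift (r := 1)
      simpa using hl
    have ha := hmin _ h1
    have hb := hspec1 _ h1
    rw [abs_le]
    constructor <;> linarith
  have hnormW2 : spNorm (W - 2) ≤ 2 - lammin := by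
    have h2 : ((2 : Matrix (Fin m) (Fin m) ℝ)).IsHermitian := by
      have := (Matrix.isHermitian_one (α := ℝ) (n := Fin m)).add Matrix.isHermitian_one
      simpa [one_add_one_eq_two] using this
    refine spNorm_le_of_spectrum (hherm.sub h2) (by linarith) fun lam hl => ?_
    have h1 : lam + 2 ∈ spectrum ℝ W := by
      apply spectrum_shift (r := 2)
      have : algebraMap ℝ (Matrix (Fin m) (Fin m) ℝ) 2 = 2 := by
        rw [map_ofNat]
      rwa [this]
    have ha := hmin _ h1
    have hb := hspec1 _ h1
    rw [abs_le]
    constructor <;> linarith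
  have hnormC : spNorm ((W - 1) * W ^ t) ≤ (1 - lammin) * lam2 ^ t := by
    rw [key_factor hrow hcol ht]
    calc spNorm ((W - 1) * (W - avgMat m) ^ t)
        ≤ spNorm (W - 1) * spNorm ((W - avgMat m) ^ t) := spNorm_mul_le _ _
      _ ≤ (1 - lammin) * lam2 ^ t := by
          apply mul_le_mul hnormW1 _ (spNorm_nonneg _) (by linarith)
          exact (spNorm_pow_le _ t).trans (pow_le_pow_left₀ (spNorm_nonneg _) hnormWJ t)
  set A : ℕ → Matrix (Fin m) (Fin m) ℝ := fun s => (W - 1) * (W ^ s * (W - 1)) with hA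
  set Bm : Matrix (Fin m) (Fin m) ℝ := W - 2 with hBm
  set c : Fin m → ℝ := ((W - 1) * W ^ t) *ᵥ z₀ with hcdef
  set F : Finset (ℕ × Fin m) := (Finset.range (t + 1)) ×ˢ (univ : Finset (Fin m)) with hF
  set a : Fin m → ℕ × Fin m → ℝ :=
    fun i p => if p.1 = t then Bm i p.2 else A (t - p.1 - 1) i p.2 with ha
  -- the vector-level identity
  have hkey : ∀ ω, z (t + 1) ω - zhat t ω
      = (((W - 1) * W ^ t) *ᵥ z₀)
        + (∑ s ∈ Finset.range t, (A s) *ᵥ (fun j => ε (t - s - 1) j ω))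
        + Bm *ᵥ (fun j => ε t j ω) := by
    intro ω
    have hsum1 : ∑ s ∈ Finset.range (t + 1), (W ^ s * (W - 1)) *ᵥ (fun j => ε (t - s) j ω)
        = (∑ s ∈ Finset.range t, (W ^ (s + 1) * (W - 1)) *ᵥ (fun j => ε (t - s - 1) j ω))
          + (W - 1) *ᵥ (fun j => ε t j ω) := by
      rw [Finset.sum_range_succ']
      refine congrArg₂ (· + ·) ?_ ?_
      · refine Finset.sum_congr rfl fun s hs => ?_
        have h : t - (s + 1) = t - s - 1 := by omega
        rw [h]
      · rw [pow_zero, one_mul, Nat.sub_zero]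
    have e1 : (W ^ (t + 1)) *ᵥ z₀ = (W ^ t) *ᵥ z₀ + ((W - 1) * W ^ t) *ᵥ z₀ := by
      have h : (W - 1) * W ^ t = W ^ (t + 1) - W ^ t := by
        rw [Matrix.sub_mul, one_mul, ← pow_succ']
      rw [h, Matrix.sub_mulVec]
      abel
    have e2 : ∀ s (x : Fin m → ℝ),
        (W ^ (s + 1) * (W - 1)) *ᵥ x = (W ^ s * (W - 1)) *ᵥ x + (A s) *ᵥ x := by
      intro s x
      have h : A s = W ^ (s + 1) * (W - 1) - W ^ s * (W - 1) := by
        rw [hA]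
        simp only
        rw [Matrix.sub_mul, one_mul, ← mul_assoc, ← pow_succ']
      rw [h, Matrix.sub_mulVec]
      abel
    have e3 : ∀ x : Fin m → ℝ, (W - 1) *ᵥ x = x + Bm *ᵥ x := by
      intro x
      have h : (W : Matrix (Fin m) (Fin m) ℝ) - 1 = 1 + Bm := by
        rw [hBm, show (2 : Matrix (Fin m) (Fin m) ℝ) = 1 + 1 from (one_add_one_eq_two).symm]
        abel
      rw [h, Matrix.add_mulVec, Matrix.one_mulVec]
    rw [hz, hzhat, hsum1, e1, e3]
    have e4 : ∑ s ∈ Finset.range t, (W ^ (s + 1) * (W - 1)) *ᵥ (fun j => ε (t - s - 1) j ω)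
        = (∑ s ∈ Finset.range t, (W ^ s * (W - 1)) *ᵥ (fun j => ε (t - s - 1) j ω))
          + ∑ s ∈ Finset.range t, (A s) *ᵥ (fun j => ε (t - s - 1) j ω) := by
      rw [← Finset.sum_add_distrib]
      exact Finset.sum_congr rfl fun s _ => e2 s _
    rw [e4]
    abel
  have hD : ∀ ω i, z (t + 1) ω i - zhat t ω i = c i + ∑ p ∈ F, a i p * ε p.1 p.2 ω := by
    intro ω i
    have h0 : z (t + 1) ω i - zhat t ω i = (z (t + 1) ω - zhat t ω) i := rfl
    rw [h0, hkey ω]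
    simp only [Pi.add_apply, Finset.sum_apply]
    have hswap : ∑ s ∈ Finset.range t, ((A s) *ᵥ (fun j => ε (t - s - 1) j ω)) i
        = ∑ s ∈ Finset.range t, ∑ j, A (t - s - 1) i j * ε s j ω := by
      rw [← Finset.sum_range_reflect (fun s => ∑ j, A (t - s - 1) i j * ε s j ω) t]
      refine Finset.sum_congr rfl fun s hs => ?_
      rw [Finset.mem_range] at hs
      have h1 : t - (t - 1 - s) - 1 = s := by omega
      have h2 : t - 1 - s = t - s - 1 := by omega
      rw [h1, h2]
      simp [Matrix.mulVec, dotProduct]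
    have hexp : ∑ p ∈ F, a i p * ε p.1 p.2 ω
        = (∑ s ∈ Finset.range t, ∑ j, A (t - s - 1) i j * ε s j ω)
          + ∑ j, Bm i j * ε t j ω := by
      rw [hF, Finset.sum_product, Finset.sum_range_succ]
      refine congrArg₂ (· + ·) ?_ ?_
      · refine Finset.sum_congr rfl fun s hs => Finset.sum_congr rfl fun j _ => ?_
        rw [Finset.mem_range] at hs
        simp [ha, Nat.ne_of_lt hs]
      · refine Finset.sum_congr rfl fun j _ => ?_
        simp [ha]
    rw [hexp, hswap]
    have hBv : (Bm *ᵥ (fun j => ε t j ω)) i = ∑ j, Bm i j * ε t j ω := by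
      simp [Matrix.mulVec, dotProduct]
    rw [hBv, hcdef]
    ring
  have hfneq : ∀ i, (fun ω => ∑ p ∈ F, a i p * ε p.1 p.2 ω)
      = ∑ p ∈ F, (fun ω => a i p * ε p.1 p.2 ω) := by
    intro i
    ext ω
    simp
  have hYmem0 : ∀ i, MemLp (fun ω => ∑ p ∈ F, a i p * ε p.1 p.2 ω) 2 μ := by
    intro i
    rw [hfneq i]
    exact memLp_finset_sum' F fun p _ => (hL2 p.1 p.2).const_mul (a i p)
  have hDmem : ∀ i, MemLp (fun ω => z (t + 1) ω i - zhat t ω i) 2 μ := by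
    intro i
    have h : (fun ω => z (t + 1) ω i - zhat t ω i)
        = fun ω => c i + ∑ p ∈ F, a i p * ε p.1 p.2 ω := funext fun ω => hD ω i
    rw [h]
    exact (memLp_const (c i)).add (hYmem0 i)
  have hintD2 : ∀ i, ∫ ω, (z (t + 1) ω i - zhat t ω i) ^ 2 ∂μ
      = c i ^ 2 + ∑ p ∈ F, a i p ^ 2 * variance (ε p.1 p.2) μ := by
    intro i
    set Y : Ω → ℝ := fun ω => ∑ p ∈ F, a i p * ε p.1 p.2 ω with hY
    have hYmem : MemLp Y 2 μ := hYmem0 i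
    have hYint : ∫ ω, Y ω ∂μ = 0 := by
      rw [hY]
      rw [integral_finset_sum F
        (fun p _ => ((hL2 p.1 p.2).integrable one_le_two).const_mul _)]
      simp only [MeasureTheory.integral_const_mul]
      simp [hmean]
    have hvarY : variance Y μ = ∑ p ∈ F, a i p ^ 2 * variance (ε p.1 p.2) μ := by
      rw [hY, hfneq i]
      have hpw : (↑F : Set (ℕ × Fin m)).Pairwise fun p q =>
          IndepFun (fun ω => a i p * ε p.1 p.2 ω) (fun ω => a i q * ε q.1 q.2 ω) μ :=
        fun p _ q _ hpq =>
          (hindep.indepFun hpq).comp (measurable_const_mul _) (measurable_const_mul _)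
      rw [ProbabilityTheory.IndepFun.variance_sum
        (fun p _ => (hL2 p.1 p.2).const_mul (a i p)) hpw]
      exact Finset.sum_congr rfl fun p _ => variance_const_mul (a i p) _ μ
    have hY2 : ∫ ω, Y ω ^ 2 ∂μ = variance Y μ := by
      have hv := variance_eq_sub hYmem
      have h2 : μ[Y ^ 2] = ∫ ω, Y ω ^ 2 ∂μ := by
        congr 1
      rw [hv, h2, hYint]
      ring
    have hfun : (fun ω => (z (t + 1) ω i - zhat t ω i) ^ 2)
        = fun ω => c i ^ 2 + ((2 * c i) * Y ω + Y ω ^ 2) := funext fun ω => by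
      rw [hD ω i]; ring
    have hint1 : Integrable (fun ω => 2 * c i * Y ω) μ :=
      (hYmem.integrable one_le_two).const_mul _
    have hint2 : Integrable (fun ω => Y ω ^ 2) μ := hYmem.integrable_sq
    have hint3 : Integrable (fun ω => 2 * c i * Y ω + Y ω ^ 2) μ := hint1.add hint2
    rw [hfun]
    rw [integral_add (integrable_const _) hint3, integral_add hint1 hint2]
    rw [MeasureTheory.integral_const_mul, hYint, hY2, hvarY]
    simp
  have hLHS : ∫ ω, eucNorm (z (t + 1) ω - zhat t ω) ^ 2 ∂μ
      = ∑ i, (c i ^ 2 + ∑ p ∈ F, a i p ^ 2 * variance (ε p.1 p.2) μ) := by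
    have h1 : (fun ω => eucNorm (z (t + 1) ω - zhat t ω) ^ 2)
        = fun ω => ∑ i, (z (t + 1) ω i - zhat t ω i) ^ 2 := by
      funext ω
      rw [eucNorm_sq]
      exact Finset.sum_congr rfl fun i _ => by rw [Pi.sub_apply]
    rw [show (fun ω => eucNorm (z (t + 1) ω - zhat t ω) ^ 2)
        = fun ω => ∑ i, (z (t + 1) ω i - zhat t ω i) ^ 2 from h1]
    rw [MeasureTheory.integral_finset_sum univ (fun i _ => (hDmem i).integrable_sq)]
    exact Finset.sum_congr rfl fun i _ => hintD2 i
  have hterm1 : ∑ i, c i ^ 2 ≤ eucNorm z₀ ^ 2 * lam2 ^ (2 * t) * (1 - lammin) ^ 2 := by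
    have h1 : ∑ i, c i ^ 2 = eucNorm c ^ 2 := (eucNorm_sq c).symm
    have h2 : eucNorm c ≤ ((1 - lammin) * lam2 ^ t) * eucNorm z₀ := by
      rw [hcdef]
      exact (eucNorm_mulVec_le _ _).trans
        (mul_le_mul_of_nonneg_right hnormC (eucNorm_nonneg _))
    rw [h1]
    calc eucNorm c ^ 2 ≤ (((1 - lammin) * lam2 ^ t) * eucNorm z₀) ^ 2 :=
          pow_le_pow_left₀ (eucNorm_nonneg _) h2 2
      _ = eucNorm z₀ ^ 2 * lam2 ^ (2 * t) * (1 - lammin) ^ 2 := by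
          have hp : (lam2 ^ t) ^ 2 = lam2 ^ (2 * t) := by rw [← pow_mul, Nat.mul_comm]
          rw [mul_pow, mul_pow, hp]
          ring
  have hσ : ∀ (s : ℕ) (j : Fin m), variance (ε s j) μ ≤ S s ^ 2 / (2 ^ (2 * n) * 12) := by
    intro s j
    have h := hvar s j
    have heq : (S s / 2 ^ n) ^ 2 / 12 = S s ^ 2 / (2 ^ (2 * n) * 12) := by
      rw [div_pow, div_div]
      congr 2
      rw [← pow_mul, Nat.mul_comm]
    rwa [heq] at h
  have hterm2 : ∑ i, ∑ p ∈ F, a i p ^ 2 * variance (ε p.1 p.2) μ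
      ≤ (1 - lammin) ^ 2 * ∑ s ∈ Finset.range t,
          spNorm (W ^ s * (W - 1)) ^ 2 * m * S (t - s - 1) ^ 2 / (2 ^ (2 * n) * 12)
        + (2 - lammin) ^ 2 * m * S t ^ 2 / (2 ^ (2 * n) * 12) := by
    rw [Finset.sum_comm]
    have hps : ∀ p ∈ F, ∑ i, a i p ^ 2 * variance (ε p.1 p.2) μ
        = (∑ i, a i p ^ 2) * variance (ε p.1 p.2) μ := fun p _ => by rw [Finset.sum_mul]
    rw [Finset.sum_congr rfl hps, hF, Finset.sum_product, Finset.sum_range_succ]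
    have hmain : ∀ s < t, ∑ j, (∑ i, a i (s, j) ^ 2) * variance (ε s j) μ
        ≤ (1 - lammin) ^ 2 *
            (spNorm (W ^ (t - s - 1) * (W - 1)) ^ 2 * m * S s ^ 2 / (2 ^ (2 * n) * 12)) := by
      intro s hst
      have haA : ∀ i j, a i (s, j) = A (t - s - 1) i j := fun i j => by
        simp [ha, Nat.ne_of_lt hst]
      calc ∑ j, (∑ i, a i (s, j) ^ 2) * variance (ε s j) μ
          ≤ ∑ j, (∑ i, a i (s, j) ^ 2) * (S s ^ 2 / (2 ^ (2 * n) * 12)) := by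
            refine Finset.sum_le_sum fun j _ => ?_
            refine mul_le_mul_of_nonneg_left (hσ s j)
              (Finset.sum_nonneg fun i _ => sq_nonneg _)
        _ = (∑ j, ∑ i, A (t - s - 1) i j ^ 2) * (S s ^ 2 / (2 ^ (2 * n) * 12)) := by
            rw [← Finset.sum_mul]
            congr 1
            exact Finset.sum_congr rfl fun j _ =>
              Finset.sum_congr rfl fun i _ => by rw [haA]
        _ ≤ ((m : ℝ) * spNorm (A (t - s - 1)) ^ 2) * (S s ^ 2 / (2 ^ (2 * n) * 12)) :=
            mul_le_mul_of_nonneg_right (frob_le _) (by positivity)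
        _ ≤ ((m : ℝ) * ((1 - lammin) * spNorm (W ^ (t - s - 1) * (W - 1))) ^ 2) *
              (S s ^ 2 / (2 ^ (2 * n) * 12)) := by
            refine mul_le_mul_of_nonneg_right
              (mul_le_mul_of_nonneg_left ?_ (Nat.cast_nonneg m)) (by positivity)
            refine pow_le_pow_left₀ (spNorm_nonneg _) ?_ 2
            exact (spNorm_mul_le _ _).trans
              (mul_le_mul_of_nonneg_right hnormW1 (spNorm_nonneg _))
        _ = (1 - lammin) ^ 2 *
              (spNorm (W ^ (t - s - 1) * (W - 1)) ^ 2 * m * S s ^ 2 / (2 ^ (2 * n) * 12)) := by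
            ring
    have hlast : ∑ j, (∑ i, a i (t, j) ^ 2) * variance (ε t j) μ
        ≤ (2 - lammin) ^ 2 * m * S t ^ 2 / (2 ^ (2 * n) * 12) := by
      have haB : ∀ i j, a i (t, j) = Bm i j := fun i j => by simp [ha]
      calc ∑ j, (∑ i, a i (t, j) ^ 2) * variance (ε t j) μ
          ≤ ∑ j, (∑ i, a i (t, j) ^ 2) * (S t ^ 2 / (2 ^ (2 * n) * 12)) := by
            refine Finset.sum_le_sum fun j _ => mul_le_mul_of_nonneg_left (hσ t j)
              (Finset.sum_nonneg fun i _ => sq_nonneg _)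
        _ = (∑ j, ∑ i, Bm i j ^ 2) * (S t ^ 2 / (2 ^ (2 * n) * 12)) := by
            rw [← Finset.sum_mul]
            congr 1
            exact Finset.sum_congr rfl fun j _ =>
              Finset.sum_congr rfl fun i _ => by rw [haB]
        _ ≤ ((m : ℝ) * spNorm Bm ^ 2) * (S t ^ 2 / (2 ^ (2 * n) * 12)) :=
            mul_le_mul_of_nonneg_right (frob_le _) (by positivity)
        _ ≤ ((m : ℝ) * (2 - lammin) ^ 2) * (S t ^ 2 / (2 ^ (2 * n) * 12)) := by
            refine mul_le_mul_of_nonneg_right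
              (mul_le_mul_of_nonneg_left ?_ (Nat.cast_nonneg m)) (by positivity)
            exact pow_le_pow_left₀ (spNorm_nonneg _) hnormW2 2
        _ = (2 - lammin) ^ 2 * m * S t ^ 2 / (2 ^ (2 * n) * 12) := by ring
    have hsum_refl : ∑ s ∈ Finset.range t, (1 - lammin) ^ 2 *
        (spNorm (W ^ (t - s - 1) * (W - 1)) ^ 2 * m * S s ^ 2 / (2 ^ (2 * n) * 12))
        = (1 - lammin) ^ 2 * ∑ s ∈ Finset.range t,
            spNorm (W ^ s * (W - 1)) ^ 2 * m * S (t - s - 1) ^ 2 / (2 ^ (2 * n) * 12) := by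
      rw [Finset.mul_sum]
      rw [← Finset.sum_range_reflect (fun s => (1 - lammin) ^ 2 *
        (spNorm (W ^ s * (W - 1)) ^ 2 * m * S (t - s - 1) ^ 2 / (2 ^ (2 * n) * 12))) t]
      refine Finset.sum_congr rfl fun s hs => ?_
      rw [Finset.mem_range] at hs
      have h2 : t - (t - 1 - s) - 1 = s := by omega
      have h1 : t - 1 - s = t - s - 1 := by omega
      rw [h2, h1]
    calc (∑ s ∈ Finset.range t, ∑ j, (∑ i, a i (s, j) ^ 2) * variance (ε s j) μ)
          + ∑ j, (∑ i, a i (t, j) ^ 2) * variance (ε t j) μ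
        ≤ (∑ s ∈ Finset.range t, (1 - lammin) ^ 2 *
            (spNorm (W ^ (t - s - 1) * (W - 1)) ^ 2 * m * S s ^ 2 / (2 ^ (2 * n) * 12)))
          + (2 - lammin) ^ 2 * m * S t ^ 2 / (2 ^ (2 * n) * 12) :=
          add_le_add (Finset.sum_le_sum fun s hs => hmain s (Finset.mem_range.mp hs)) hlast
      _ = (1 - lammin) ^ 2 * (∑ s ∈ Finset.range t,
            spNorm (W ^ s * (W - 1)) ^ 2 * m * S (t - s - 1) ^ 2 / (2 ^ (2 * n) * 12))
          + (2 - lammin) ^ 2 * m * S t ^ 2 / (2 ^ (2 * n) * 12) := by rw [hsum_refl]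
  rw [hLHS, Finset.sum_add_distrib]
  linarith [hterm1, hterm2]
end

section
/- Let W be a real symmetric m×m matrix satisfying 1ᵀW = 1ᵀ, W1 = 1 and ρ(W − 11ᵀ/m) < 1, let λ₂ := ρ(W − 11ᵀ/m) and let λ_min denote the smallest eigenvalue of W. Let n be a positive integer, z₀ ∈ ℝᵐ, and let (x_t)_{t≥0} be the nonnegative sequence defined by x₀ > 0, x₁ = ‖z₀‖_∞²·(1−λ_min)² + (2−λ_min)²·x₀/(3·2^{2n}), and for t ≥ 1, x_{t+1} = ‖z₀‖_∞²·λ₂^{2t}·(1−λ_min)² + (1−λ_min)²·Σ_{s=0}^{t−1} ‖Wˢ(W−I)‖²·x_{t−s−1}/(3·2^{2n}) + (2−λ_min)²·x_t/(3·2^{2n}). If (1−λ_min)⁴/(1−λ₂²) + (2−λ_min)² < 3·2^{2n}, then x_t → 0 as t → ∞ (equivalently, writing x_t = e^{−2β_t}, the quantization range size e^{−β_t} converges to zero). -/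
open Matrix Finset Filter
open scoped ENNReal NNReal

/-- The supremum norm of a vector in `ℝᵐ`. -/
noncomputable def supNorm {m : ℕ} (v : Fin m → ℝ) : ℝ := ⨆ i, |v i|

lemma aux_norm_apply_eq {m : ℕ} {V : Matrix (Fin m) (Fin m) ℝ} (hV : star V * V = 1)
    (x : EuclideanSpace ℝ (Fin m)) : ‖Matrix.toEuclideanCLM (𝕜 := ℝ) V x‖ = ‖x‖ := by
  set T := Matrix.toEuclideanCLM (𝕜 := ℝ) (n := Fin m) with hT
  have h1 : star (T V) * T V = 1 := by
    rw [← map_star T, ← _root_.map_mul T, hV, _root_.map_one T]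
  have h2 : (ContinuousLinearMap.adjoint (T V)) (T V x) = x := by
    rw [← ContinuousLinearMap.star_eq_adjoint]
    calc star (T V) (T V x) = (star (T V) * T V) x := rfl
      _ = x := by rw [h1]; rfl
  have h3 : ‖T V x‖ ^ 2 = ‖x‖ ^ 2 := by
    rw [← real_inner_self_eq_norm_sq, ← real_inner_self_eq_norm_sq]
    rw [← ContinuousLinearMap.adjoint_inner_left (𝕜 := ℝ) (T V) x (T V x), h2]
  calc ‖T V x‖ = Real.sqrt (‖T V x‖ ^ 2) := (Real.sqrt_sq (norm_nonneg _)).symm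
    _ = Real.sqrt (‖x‖ ^ 2) := by rw [h3]
    _ = ‖x‖ := Real.sqrt_sq (norm_nonneg _)

lemma aux_diag_norm_le {m : ℕ} (g : Fin m → ℝ) (C : ℝ) (hC0 : 0 ≤ C) (hC : ∀ i, |g i| ≤ C)
    (x : EuclideanSpace ℝ (Fin m)) :
    ‖Matrix.toEuclideanCLM (𝕜 := ℝ) (Matrix.diagonal g) x‖ ≤ C * ‖x‖ := by
  set y := Matrix.toEuclideanCLM (𝕜 := ℝ) (Matrix.diagonal g) x with hy
  have hwl : (WithLp.equiv 2 (Fin m → ℝ)) y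
      = Matrix.diagonal g *ᵥ (WithLp.equiv 2 (Fin m → ℝ)) x :=
    Matrix.ofLp_toEuclideanCLM (𝕜 := ℝ) _ _
  have hcoord : ∀ i, y i = g i * x i := by
    intro i
    have h1 : y i = ((WithLp.equiv 2 (Fin m → ℝ)) y) i := rfl
    rw [h1, hwl, Matrix.mulVec_diagonal]
    rfl
  rw [EuclideanSpace.norm_eq, EuclideanSpace.norm_eq]
  rw [← Real.sqrt_sq hC0, ← Real.sqrt_mul (sq_nonneg C)]
  apply Real.sqrt_le_sqrt
  rw [Finset.mul_sum]
  apply Finset.sum_le_sum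
  intro i _
  rw [hcoord i]
  have h1 : ‖g i * x i‖ ^ 2 = (g i) ^ 2 * ‖x i‖ ^ 2 := by
    rw [norm_mul, mul_pow]; congr 1; rw [Real.norm_eq_abs, sq_abs]
  rw [h1]
  apply mul_le_mul_of_nonneg_right _ (sq_nonneg _)
  calc (g i) ^ 2 = |g i| ^ 2 := (sq_abs _).symm
    _ ≤ C ^ 2 := by apply pow_le_pow_left₀ (abs_nonneg _) (hC i)

lemma aux_conj_norm_le {m : ℕ} (U : Matrix (Fin m) (Fin m) ℝ)
    (hU : U ∈ Matrix.unitaryGroup (Fin m) ℝ) (g : Fin m → ℝ) (C : ℝ) (hC0 : 0 ≤ C)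
    (hC : ∀ i, |g i| ≤ C) : spNorm (U * Matrix.diagonal g * star U) ≤ C := by
  set T := Matrix.toEuclideanCLM (𝕜 := ℝ) (n := Fin m) with hT
  have hU1 : star U * U = 1 := Matrix.UnitaryGroup.star_mul_self ⟨U, hU⟩
  have hU2 : U * star U = 1 := Matrix.mem_unitaryGroup_iff.mp hU
  have hU2' : star (star U) * star U = 1 := by rwa [star_star]
  rw [spNorm]
  apply ContinuousLinearMap.opNorm_le_bound _ hC0
  intro x
  have happ : T (U * Matrix.diagonal g * star U) x
      = T U (T (Matrix.diagonal g) (T (star U) x)) := by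
    rw [_root_.map_mul T, _root_.map_mul T, ContinuousLinearMap.mul_apply,
      ContinuousLinearMap.mul_apply]
  rw [happ, aux_norm_apply_eq hU1]
  calc ‖T (Matrix.diagonal g) (T (star U) x)‖ ≤ C * ‖T (star U) x‖ :=
      aux_diag_norm_le g C hC0 hC _
    _ = C * ‖x‖ := by rw [aux_norm_apply_eq hU2']

lemma aux_spectrum_split {m : ℕ} (hm : 0 < m) (W : Matrix (Fin m) (Fin m) ℝ)
    (hPW : avgMat m * W = avgMat m) (hWP : W * avgMat m = avgMat m)
    {μ : ℝ} (hμ : μ ∈ spectrum ℝ W) (hμ1 : μ ≠ 1) : μ ∈ spectrum ℝ (W - avgMat m) := by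
  set P := avgMat m with hPdef
  have hPP : P * P = P := by
    ext i j
    simp only [hPdef, avgMat, Matrix.mul_apply, Matrix.of_apply]
    rw [Finset.sum_const, Finset.card_univ, Fintype.card_fin]
    have hm' : (m : ℝ) ≠ 0 := Nat.cast_ne_zero.mpr hm.ne'
    field_simp
    rw [nsmul_eq_mul, one_div, ← mul_assoc, ← sq, mul_inv_cancel₀ (pow_ne_zero 2 hm')]
  have hPne : P ≠ 0 := by
    intro h
    have := congrFun (congrFun h ⟨0, hm⟩) ⟨0, hm⟩
    simp only [hPdef, avgMat, Matrix.of_apply, Matrix.zero_apply] at this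
    have hm' : (m : ℝ) ≠ 0 := Nat.cast_ne_zero.mpr hm.ne'
    exact (div_ne_zero one_ne_zero hm') this
  by_contra h
  rw [spectrum.mem_iff, not_not] at h
  rw [spectrum.mem_iff] at hμ
  apply hμ
  rw [Algebra.algebraMap_eq_smul_one] at h ⊢
  set A := μ • (1 : Matrix (Fin m) (Fin m) ℝ) - (W - P) with hA
  obtain ⟨u, hu⟩ := h
  set B := ((u⁻¹ : (Matrix (Fin m) (Fin m) ℝ)ˣ) : Matrix (Fin m) (Fin m) ℝ) with hB
  have hAB : A * B = 1 := by rw [← hu, hB]; exact u.mul_inv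
  have hPA : P * A = μ • P := by
    rw [hA, Matrix.mul_sub, Matrix.mul_sub, Matrix.mul_smul, Matrix.mul_one, hPW, hPP]
    simp
  have hμ0 : μ ≠ 0 := by
    intro h0
    apply hPne
    calc P = P * (A * B) := by rw [hAB, Matrix.mul_one]
      _ = (P * A) * B := by rw [Matrix.mul_assoc]
      _ = 0 := by rw [hPA, h0, zero_smul, Matrix.zero_mul]
  have hPB : P * B = μ⁻¹ • P := by
    have h1 : μ • (P * B) = P := by
      calc μ • (P * B) = (μ • P) * B := by rw [Matrix.smul_mul]
        _ = (P * A) * B := by rw [hPA]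
        _ = P * (A * B) := by rw [Matrix.mul_assoc]
        _ = P := by rw [hAB, Matrix.mul_one]
    have h2 : P * B = μ⁻¹ • (μ • (P * B)) := by
      rw [smul_smul, inv_mul_cancel₀ hμ0, one_smul]
    rw [h2, h1]
  set X := (μ - 1)⁻¹ • P + B * (1 - P) with hX
  have hμ1' : μ - 1 ≠ 0 := sub_ne_zero.mpr hμ1
  have hkey : (μ • (1 : Matrix (Fin m) (Fin m) ℝ) - W) * X = 1 := by
    have ht1 : (μ • (1 : Matrix (Fin m) (Fin m) ℝ) - W) * ((μ - 1)⁻¹ • P) = P := by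
      rw [Matrix.mul_smul, Matrix.sub_mul, Matrix.smul_mul, Matrix.one_mul, hWP]
      have hsub : μ • P - P = (μ - 1) • P := by rw [sub_smul, one_smul]
      rw [hsub, smul_smul, inv_mul_cancel₀ hμ1', one_smul]
    have hAP : μ • (1 : Matrix (Fin m) (Fin m) ℝ) - W = A - P := by rw [hA]; abel
    have ht2 : (μ • (1 : Matrix (Fin m) (Fin m) ℝ) - W) * (B * (1 - P)) = 1 - P := by
      rw [hAP, Matrix.sub_mul]
      rw [← Matrix.mul_assoc A B (1 - P), hAB, Matrix.one_mul]
      rw [← Matrix.mul_assoc P B (1 - P), hPB, Matrix.smul_mul]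
      rw [Matrix.mul_sub, Matrix.mul_one, hPP, sub_self, smul_zero, sub_zero]
    rw [hX, Matrix.mul_add, ht1, ht2]
    abel
  exact ⟨⟨μ • (1 : Matrix (Fin m) (Fin m) ℝ) - W, X, hkey, mul_eq_one_comm.mp hkey⟩, rfl⟩

lemma aux_tendsto_of_rec (x : ℕ → ℝ) (A0 q c d : ℝ) (hA0 : 0 ≤ A0) (hq : 0 ≤ q) (hq1 : q < 1)
    (hc : 0 ≤ c) (hd : 0 ≤ d) (hx : ∀ t, 0 ≤ x t)
    (hrec : ∀ t, 1 ≤ t →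
      x (t + 1) ≤ A0 * q ^ t + c * ∑ s ∈ Finset.range t, q ^ s * x (t - s - 1) + d * x t)
    (hlt : c / (1 - q) + d < 1) : Tendsto x atTop (nhds 0) := by
  -- find θ ∈ (q, 1) with c/(θ-q) + d < θ
  obtain ⟨θ, hθmem, hθ⟩ : ∃ θ, θ ∈ Set.Ioo q 1 ∧ c / (θ - q) + d < θ := by
    have hcont : ContinuousAt (fun θ : ℝ => c / (θ - q) + d - θ) 1 := by
      have h1 : (1 : ℝ) - q ≠ 0 := by linarith
      fun_prop (disch := simpa using h1)
    have hneg : (fun θ : ℝ => c / (θ - q) + d - θ) 1 < 0 := by simpa using by linarith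
    have hev : ∀ᶠ θ in nhds (1 : ℝ), c / (θ - q) + d - θ < 0 :=
      hcont.eventually_lt_const hneg
    have hev' : ∀ᶠ θ in nhdsWithin (1 : ℝ) (Set.Iio 1), c / (θ - q) + d - θ < 0 :=
      nhdsWithin_le_nhds hev
    have hmem : Set.Ioo q 1 ∈ nhdsWithin (1 : ℝ) (Set.Iio 1) :=
      Ioo_mem_nhdsLT_of_mem (by constructor <;> linarith)
    obtain ⟨θ, h1, h2⟩ := (hev'.and (eventually_of_mem hmem (fun θ hθ => hθ))).exists
    exact ⟨θ, h2, by linarith⟩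
  obtain ⟨hqθ, hθ1⟩ := hθmem
  have hθ0 : 0 < θ := lt_of_le_of_lt hq hqθ
  have hθq : 0 < θ - q := by linarith
  have hg : 0 < θ - (c / (θ - q) + d) := by linarith
  set C : ℝ := max (max (x 0) (x 1 / θ)) (A0 / (θ - (c / (θ - q) + d))) with hC
  have hCx0 : x 0 ≤ C := le_trans (le_max_left _ _) (le_max_left _ _)
  have hCx1 : x 1 / θ ≤ C := le_trans (le_max_right _ _) (le_max_left _ _)
  have hCA : A0 / (θ - (c / (θ - q) + d)) ≤ C := le_max_right _ _
  have hC0 : 0 ≤ C := le_trans (hx 0) hCx0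
  have key : ∀ t, x t ≤ C * θ ^ t := by
    intro t
    induction t using Nat.strong_induction_on with
    | _ t ih =>
      match t with
      | 0 => simpa using hCx0
      | 1 => rw [pow_one]; rw [div_le_iff₀ hθ0] at hCx1; linarith [hCx1]
      | (t + 2) =>
        have ht1 : 1 ≤ t + 1 := by omega
        have h1 := hrec (t + 1) ht1
        -- bound the geometric-convolution sum
        have hsum : ∑ s ∈ Finset.range (t + 1), q ^ s * x (t + 1 - s - 1)
            ≤ C * θ ^ (t + 1) / (θ - q) := by
          have hsum1 : ∑ s ∈ Finset.range (t + 1), q ^ s * x (t + 1 - s - 1)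
              ≤ ∑ s ∈ Finset.range (t + 1), q ^ s * (C * θ ^ (t - s)) := by
            apply Finset.sum_le_sum
            intro s hs
            have hs' : s < t + 1 := Finset.mem_range.mp hs
            have : t + 1 - s - 1 = t - s := by omega
            rw [this]
            exact mul_le_mul_of_nonneg_left (ih (t - s) (by omega)) (pow_nonneg hq s)
          refine hsum1.trans ?_
          have hsum2 : ∑ s ∈ Finset.range (t + 1), q ^ s * (C * θ ^ (t - s))
              = C * ∑ s ∈ Finset.range (t + 1), q ^ s * θ ^ (t + 1 - 1 - s) := by
            rw [Finset.mul_sum]; apply Finset.sum_congr rfl; intro s hs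
            have : t + 1 - 1 - s = t - s := by omega
            rw [this]; ring
          have hgeom : ∑ s ∈ Finset.range (t + 1), q ^ s * θ ^ (t + 1 - 1 - s)
              ≤ θ ^ (t + 1) / (θ - q) := by
            have h := geom_sum₂_mul q θ (t + 1)
            have : (∑ s ∈ Finset.range (t + 1), q ^ s * θ ^ (t + 1 - 1 - s)) * (θ - q)
                = θ ^ (t + 1) - q ^ (t + 1) := by
              have := geom_sum₂_mul q θ (t + 1)
              -- this : (∑ i in range (t+1), q ^ i * θ ^ (t + 1 - 1 - i)) * (q - θ) = q^(t+1) - θ^(t+1)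
              nlinarith [this]
            rw [le_div_iff₀ hθq, this]
            have : 0 ≤ q ^ (t + 1) := pow_nonneg hq _
            linarith
          rw [hsum2]
          calc C * ∑ s ∈ Finset.range (t + 1), q ^ s * θ ^ (t + 1 - 1 - s) ≤
              C * (θ ^ (t + 1) / (θ - q)) := mul_le_mul_of_nonneg_left hgeom hC0
            _ = C * θ ^ (t + 1) / (θ - q) := by ring
        have hqθpow : q ^ (t + 1) ≤ θ ^ (t + 1) := pow_le_pow_left₀ hq hqθ.le _
        have hxb : x (t + 1) ≤ C * θ ^ (t + 1) := ih (t + 1) (by omega)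
        have hCgoal : A0 ≤ C * (θ - (c / (θ - q) + d)) := by
          rw [div_le_iff₀ hg] at hCA; linarith
        calc x (t + 2) ≤ A0 * q ^ (t + 1) + c * ∑ s ∈ Finset.range (t + 1),
              q ^ s * x (t + 1 - s - 1) + d * x (t + 1) := h1
          _ ≤ A0 * θ ^ (t + 1) + c * (C * θ ^ (t + 1) / (θ - q)) + d * (C * θ ^ (t + 1)) := by
              gcongr
          _ = (A0 + C * (c / (θ - q) + d)) * θ ^ (t + 1) := by ring
          _ ≤ (C * θ) * θ ^ (t + 1) := by nlinarith [pow_nonneg hθ0.le (t + 1)]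
          _ = C * θ ^ (t + 2) := by ring
  have h0 : Tendsto (fun t : ℕ => C * θ ^ t) atTop (nhds 0) := by
    simpa using (tendsto_pow_atTop_nhds_zero_of_lt_one hθ0.le hθ1).const_mul C
  exact squeeze_zero hx key h0
/-- **Proposition 3.** Let `W` be a real symmetric `m×m` matrix with `1ᵀW = 1ᵀ`,
`W1 = 1`, `ρ(W − 11ᵀ/m) < 1`; `λ₂ := ρ(W − 11ᵀ/m)`, `λ_min` the smallest eigenvalue of `W`.
Let `(x_t)` be the sequence with `x₀ > 0`,
`x₁ = ‖z₀‖_∞²(1−λ_min)² + (2−λ_min)²·x₀/(3·2^{2n})`, and for `t ≥ 1`,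
`x_{t+1} = ‖z₀‖_∞²·λ₂^{2t}·(1−λ_min)² + (1−λ_min)²·Σ_{s=0}^{t−1}‖Wˢ(W−I)‖²·x_{t−s−1}/(3·2^{2n})
 + (2−λ_min)²·x_t/(3·2^{2n})`.
If `(1−λ_min)⁴/(1−λ₂²) + (2−λ_min)² < 3·2^{2n}` then `x_t → 0`. -/
theorem prop3_quantization_range_tendsto_zero {m : ℕ}
    (W : Matrix (Fin m) (Fin m) ℝ) (hsym : W.IsSymm)
    (hcol : Matrix.vecMul (fun _ => (1 : ℝ)) W = fun _ => 1)
    (hrow : W.mulVec (fun _ => (1 : ℝ)) = fun _ => 1)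
    (hρ : spectralRadius ℝ (W - avgMat m) < 1)
    (lam2 : ℝ) (hlam2 : lam2 = (spectralRadius ℝ (W - avgMat m)).toReal)
    (lammin : ℝ) (hmem : lammin ∈ spectrum ℝ W)
    (hmin : ∀ μ ∈ spectrum ℝ W, lammin ≤ μ)
    (n : ℕ) (hn : 0 < n) (z₀ : Fin m → ℝ)
    (x : ℕ → ℝ) (hx0 : 0 < x 0)
    (hx1 : x 1 = supNorm z₀ ^ 2 * (1 - lammin) ^ 2 + (2 - lammin) ^ 2 * x 0 / (3 * 2 ^ (2 * n)))
    (hxrec : ∀ t, 1 ≤ t →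
      x (t + 1) = supNorm z₀ ^ 2 * lam2 ^ (2 * t) * (1 - lammin) ^ 2 +
        (1 - lammin) ^ 2 *
          ∑ s ∈ Finset.range t, spNorm (W ^ s * (W - 1)) ^ 2 * x (t - s - 1) / (3 * 2 ^ (2 * n)) +
        (2 - lammin) ^ 2 * x t / (3 * 2 ^ (2 * n)))
    (hcond : (1 - lammin) ^ 4 / (1 - lam2 ^ 2) + (2 - lammin) ^ 2 < 3 * 2 ^ (2 * n)) :
    Tendsto x atTop (nhds 0) := by
  -- dispose of the degenerate case m = 0
  rcases Nat.eq_zero_or_pos m with hm | hm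
  · subst hm
    haveI : Subsingleton (Matrix (Fin 0) (Fin 0) ℝ) :=
      ⟨fun a b => by ext i; exact i.elim0⟩
    exact absurd (isUnit_of_subsingleton _) (spectrum.mem_iff.mp hmem)
  -- basic positivity facts
  have hK : (0 : ℝ) < 3 * 2 ^ (2 * n) := by positivity
  set K : ℝ := 3 * 2 ^ (2 * n) with hKdef
  -- column/row sums
  have hsumcol : ∀ j, ∑ k, W k j = 1 := by
    intro j
    have := congrFun hcol j
    simpa [Matrix.vecMul, dotProduct] using this
  have hsumrow : ∀ i, ∑ k, W i k = 1 := by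
    intro i
    have := congrFun hrow i
    simpa [Matrix.mulVec, dotProduct] using this
  have hPW : avgMat m * W = avgMat m := by
    ext i j
    simp only [Matrix.mul_apply, avgMat, Matrix.of_apply]
    rw [← Finset.mul_sum, hsumcol j, mul_one]
  have hWP : W * avgMat m = avgMat m := by
    ext i j
    simp only [Matrix.mul_apply, avgMat, Matrix.of_apply]
    rw [← Finset.sum_mul, hsumrow i, one_mul]
  -- properties of lam2
  have hne : spectralRadius ℝ (W - avgMat m) ≠ ⊤ := ne_top_of_lt hρ
  have hlam2_nonneg : 0 ≤ lam2 := hlam2 ▸ ENNReal.toReal_nonneg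
  have hlam2_lt1 : lam2 < 1 := by
    rw [hlam2]
    have := (ENNReal.toReal_lt_toReal hne (by norm_num : (1 : ℝ≥0∞) ≠ ⊤)).mpr hρ
    simpa using this
  have habs : ∀ μ ∈ spectrum ℝ (W - avgMat m), |μ| ≤ lam2 := by
    intro μ hμ
    have h1 : (‖μ‖₊ : ℝ≥0∞) ≤ spectralRadius ℝ (W - avgMat m) :=
      le_iSup₂ (f := fun k (_ : k ∈ spectrum ℝ (W - avgMat m)) => (‖k‖₊ : ℝ≥0∞)) μ hμ
    have h2 := ENNReal.toReal_mono hne h1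
    rw [hlam2]
    simpa [Real.norm_eq_abs] using h2
  have hsplit : ∀ μ ∈ spectrum ℝ W, μ = 1 ∨ |μ| ≤ lam2 := by
    intro μ hμ
    by_cases h1 : μ = 1
    · exact Or.inl h1
    · exact Or.inr (habs μ (aux_spectrum_split hm W hPW hWP hμ h1))
  have hminle1 : lammin ≤ 1 := by
    rcases hsplit lammin hmem with h | h
    · exact h.le
    · have := le_abs_self lammin
      linarith
  -- hermitian structure
  have hW : W.IsHermitian := by
    have : Wᴴ = W := by rw [Matrix.conjTranspose_eq_transpose_of_trivial]; exact hsym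
    exact this
  set ev : Fin m → ℝ := hW.eigenvalues with hev
  have hev_spec : ∀ i, ev i ∈ spectrum ℝ W := fun i => hW.eigenvalues_mem_spectrum_real i
  set U : Matrix (Fin m) (Fin m) ℝ := (hW.eigenvectorUnitary : Matrix (Fin m) (Fin m) ℝ)
    with hUdef
  have hUmem : U ∈ Matrix.unitaryGroup (Fin m) ℝ := hW.eigenvectorUnitary.2
  have hU1 : star U * U = 1 := Matrix.UnitaryGroup.star_mul_self ⟨U, hUmem⟩
  have hU2 : U * star U = 1 := Matrix.mem_unitaryGroup_iff.mp hUmem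
  have hspecthm : W = U * Matrix.diagonal ev * star U := by
    have h := hW.spectral_theorem
    rwa [show RCLike.ofReal ∘ hW.eigenvalues = ev by
      funext i; simp [RCLike.ofReal_real_eq_id, hev]] at h
  have hcancel : ∀ X : Matrix (Fin m) (Fin m) ℝ, star U * (U * X) = X := by
    intro X
    rw [← Matrix.mul_assoc, hU1, Matrix.one_mul]
  have hpow : ∀ s, W ^ s = U * Matrix.diagonal (fun i => ev i ^ s) * star U := by
    intro s
    induction s with
    | zero =>
      simp only [pow_zero]
      rw [show (Matrix.diagonal (fun _ : Fin m => (1 : ℝ))) = 1 from Matrix.diagonal_one]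
      rw [Matrix.mul_one, hU2]
    | succ s ih =>
      rw [pow_succ, ih, hspecthm]
      simp only [Matrix.mul_assoc]
      rw [hcancel]
      rw [← Matrix.mul_assoc (Matrix.diagonal fun i => ev i ^ s) (Matrix.diagonal ev) (star U),
        Matrix.diagonal_mul_diagonal]
      have heq : (fun i => ev i ^ s * ev i) = fun i => ev i ^ (s + 1) := by
        funext i; rw [pow_succ]
      rw [heq]
  have hdecomp : ∀ s, W ^ s * (W - 1)
      = U * Matrix.diagonal (fun i => ev i ^ s * (ev i - 1)) * star U := by
    intro s
    have hsub : W - 1 = U * Matrix.diagonal (fun i => ev i - 1) * star U := by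
      have h1 : (1 : Matrix (Fin m) (Fin m) ℝ) = U * Matrix.diagonal (fun _ => (1 : ℝ)) * star U := by
        rw [Matrix.diagonal_one, Matrix.mul_one, hU2]
      rw [show Matrix.diagonal (fun i => ev i - 1)
          = Matrix.diagonal ev - Matrix.diagonal (fun _ => (1 : ℝ)) from by
        rw [Matrix.diagonal_sub]]
      rw [Matrix.mul_sub, Matrix.sub_mul]
      rw [← hspecthm, ← h1]
    rw [hpow s, hsub]
    simp only [Matrix.mul_assoc]
    rw [hcancel]
    rw [← Matrix.mul_assoc (Matrix.diagonal fun i => ev i ^ s)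
      (Matrix.diagonal fun i => ev i - 1) (star U), Matrix.diagonal_mul_diagonal]
  have h1min : 0 ≤ 1 - lammin := by linarith
  have hnorm : ∀ s, spNorm (W ^ s * (W - 1)) ≤ lam2 ^ s * (1 - lammin) := by
    intro s
    rw [hdecomp s]
    apply aux_conj_norm_le U hUmem _ _ (mul_nonneg (pow_nonneg hlam2_nonneg s) h1min)
    intro i
    rcases hsplit (ev i) (hev_spec i) with h | h
    · rw [h]
      simp only [sub_self, mul_zero, abs_zero]
      exact mul_nonneg (pow_nonneg hlam2_nonneg s) h1min
    · have hle : ev i ≤ lam2 := (le_abs_self _).trans h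
      have hge : lammin ≤ ev i := hmin _ (hev_spec i)
      rw [abs_mul, abs_pow]
      apply mul_le_mul (pow_le_pow_left₀ (abs_nonneg _) h s) _ (abs_nonneg _)
        (pow_nonneg hlam2_nonneg s)
      rw [abs_sub_comm, abs_of_nonneg (by linarith : (0:ℝ) ≤ 1 - ev i)]
      linarith
  -- nonnegativity of the sequence
  have hxnn : ∀ t, 0 ≤ x t := by
    intro t
    induction t using Nat.strong_induction_on with
    | _ t ih =>
      match t with
      | 0 => exact hx0.le
      | 1 =>
        rw [hx1]
        have h0 : (0:ℝ) ≤ x 0 := hx0.le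
        positivity
      | (t + 2) =>
        rw [hxrec (t + 1) (by omega)]
        apply add_nonneg (add_nonneg _ _) _
        · positivity
        · apply mul_nonneg (sq_nonneg _)
          apply Finset.sum_nonneg
          intro s hs
          have hxs : 0 ≤ x (t + 1 - s - 1) := ih _ (by omega)
          positivity
        · have hxt : 0 ≤ x (t + 1) := ih _ (by omega)
          positivity
  -- the recurrence bound
  set A0 : ℝ := supNorm z₀ ^ 2 * (1 - lammin) ^ 2 with hA0def
  set q : ℝ := lam2 ^ 2 with hqdef
  set c : ℝ := (1 - lammin) ^ 4 / K with hcdef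
  set d : ℝ := (2 - lammin) ^ 2 / K with hddef
  have hrec : ∀ t, 1 ≤ t →
      x (t + 1) ≤ A0 * q ^ t + c * ∑ s ∈ Finset.range t, q ^ s * x (t - s - 1) + d * x t := by
    intro t ht
    rw [hxrec t ht]
    have hT1 : supNorm z₀ ^ 2 * lam2 ^ (2 * t) * (1 - lammin) ^ 2 = A0 * q ^ t := by
      rw [hA0def, hqdef, pow_mul]; ring
    have hT3 : (2 - lammin) ^ 2 * x t / K = d * x t := by rw [hddef]; ring
    have hT2 : (1 - lammin) ^ 2 *
        ∑ s ∈ Finset.range t, spNorm (W ^ s * (W - 1)) ^ 2 * x (t - s - 1) / K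
        ≤ c * ∑ s ∈ Finset.range t, q ^ s * x (t - s - 1) := by
      rw [Finset.mul_sum, Finset.mul_sum]
      apply Finset.sum_le_sum
      intro s hs
      have hxs : 0 ≤ x (t - s - 1) := hxnn _
      have hb : spNorm (W ^ s * (W - 1)) ^ 2 ≤ q ^ s * (1 - lammin) ^ 2 := by
        have h1 : spNorm (W ^ s * (W - 1)) ^ 2 ≤ (lam2 ^ s * (1 - lammin)) ^ 2 :=
          pow_le_pow_left₀ (norm_nonneg _) (hnorm s) 2
        calc spNorm (W ^ s * (W - 1)) ^ 2 ≤ (lam2 ^ s * (1 - lammin)) ^ 2 := h1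
          _ = q ^ s * (1 - lammin) ^ 2 := by rw [hqdef, mul_pow, ← pow_mul, ← pow_mul,
            Nat.mul_comm]
      have h2 : spNorm (W ^ s * (W - 1)) ^ 2 * x (t - s - 1)
          ≤ (q ^ s * (1 - lammin) ^ 2) * x (t - s - 1) :=
        mul_le_mul_of_nonneg_right hb hxs
      have h3 : spNorm (W ^ s * (W - 1)) ^ 2 * x (t - s - 1) / K
          ≤ (q ^ s * (1 - lammin) ^ 2) * x (t - s - 1) / K :=
        div_le_div_of_nonneg_right h2 hK.le
      calc (1 - lammin) ^ 2 * (spNorm (W ^ s * (W - 1)) ^ 2 * x (t - s - 1) / K)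
          ≤ (1 - lammin) ^ 2 * ((q ^ s * (1 - lammin) ^ 2) * x (t - s - 1) / K) :=
            mul_le_mul_of_nonneg_left h3 (sq_nonneg _)
        _ = c * (q ^ s * x (t - s - 1)) := by rw [hcdef]; ring
    rw [hT1, hT3]
    linarith [hT2]
  -- condition
  have hq1 : q < 1 := by
    rw [hqdef]
    exact pow_lt_one₀ hlam2_nonneg hlam2_lt1 two_ne_zero
  have hlt : c / (1 - q) + d < 1 := by
    rw [hcdef, hddef, hqdef]
    rw [div_right_comm, ← add_div, div_lt_one hK]
    exact hcond
  exact aux_tendsto_of_rec x A0 q c d (by positivity) (sq_nonneg _) hq1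
    (by rw [hcdef]; positivity) (by rw [hddef]; positivity) hxnn hrec hlt
end

section
/- Let W be a real symmetric m×m matrix satisfying 1ᵀW = 1ᵀ, W1 = 1 and ρ(W − 11ᵀ/m) < 1, let λ₂ := ρ(W − 11ᵀ/m) and λ_min its smallest eigenvalue, let n be a positive integer and z∞ := ‖z₀‖_∞ for some z₀ ∈ ℝᵐ. Let (x_t) satisfy x₁ = z∞²(1−λ_min)² + (2−λ_min)²·x₀/(3·2^{2n}) and, for t ≥ 1, x_{t+1} = z∞²·λ₂^{2t}·(1−λ_min)² + (1−λ_min)²·Σ_{s=0}^{t−1} ‖Wˢ(W−I)‖²·x_{t−s−1}/(3·2^{2n}) + (2−λ_min)²·x_t/(3·2^{2n}), with x₀ > 0. Let P be the sequence with P(0) = x₀, P(1) = x₁, and P(t) = z∞²(1−λ_min)²·λ₂^{2(t−1)} + (1−λ_min)⁴·Σ_{s=0}^{t−2} λ₂^{2s}·P(t−2−s)/(3·2^{2n}) + (2−λ_min)²·P(t−1)/(3·2^{2n}) for t ≥ 2. Then x_t ≤ P(t) for all t ≥ 0. -/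
open Matrix Finset
open scoped ENNReal NNReal

private lemma matrix_mem_spectrum_iff' {k : ℕ} (M : Matrix (Fin k) (Fin k) ℝ) (μ : ℝ) :
    μ ∈ spectrum ℝ M ↔ ∃ v, v ≠ 0 ∧ M.mulVec v = μ • v := by
  rw [← AlgEquiv.spectrum_eq (Matrix.toLinAlgEquiv' (R := ℝ) (n := Fin k)),
    ← Module.End.hasEigenvalue_iff_mem_spectrum]
  constructor
  · intro h
    obtain ⟨v, hv⟩ := h.exists_hasEigenvector
    exact ⟨v, hv.2, by simpa [Matrix.toLinAlgEquiv'_apply, Matrix.toLin'_apply,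
      Module.End.mem_eigenspace_iff] using hv.apply_eq_smul⟩
  · rintro ⟨v, hv0, hv⟩
    apply Module.End.hasEigenvalue_of_hasEigenvector (x := v)
    refine ⟨Module.End.mem_eigenspace_iff.mpr ?_, hv0⟩
    simpa [Matrix.toLinAlgEquiv'_apply, Matrix.toLin'_apply] using hv

private lemma opNorm_le_of_basis' {k : ℕ}
    (T : EuclideanSpace ℝ (Fin k) →L[ℝ] EuclideanSpace ℝ (Fin k))
    (b : OrthonormalBasis (Fin k) ℝ (EuclideanSpace ℝ (Fin k))) (d : Fin k → ℝ)
    (hT : ∀ i, T (b i) = d i • b i) (C : ℝ) (hC : 0 ≤ C) (hd : ∀ i, |d i| ≤ C) :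
    ‖T‖ ≤ C := by
  refine T.opNorm_le_bound hC fun x => ?_
  have hrepr : ∀ j, b.repr (T x) j = d j * b.repr x j := by
    intro j
    conv_lhs => rw [← b.sum_repr x]
    rw [map_sum, map_sum]
    classical
    simp only [_root_.map_smul, hT]
    simp only [_root_.map_smul, b.repr_self]
    have : ∀ c : ℝ, ∀ i, ∀ y : EuclideanSpace ℝ (Fin k), (c • y) i = c * y i := fun _ _ _ => rfl
    rw [WithLp.ofLp_sum, Finset.sum_apply]
    simp only [this, EuclideanSpace.single_apply]
    simp [Finset.sum_ite_eq', mul_comm]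
  have h1 : ‖T x‖ = Real.sqrt (∑ j, ‖d j * b.repr x j‖ ^ 2) := by
    rw [← b.repr.norm_map (T x), EuclideanSpace.norm_eq]
    congr 1
    exact Finset.sum_congr rfl fun j _ => by rw [hrepr j]
  have h2 : ‖x‖ = Real.sqrt (∑ j, ‖b.repr x j‖ ^ 2) := by
    rw [← b.repr.norm_map x, EuclideanSpace.norm_eq]
  rw [h1, h2, ← Real.sqrt_sq hC, ← Real.sqrt_mul (by positivity)]
  apply Real.sqrt_le_sqrt
  rw [Finset.mul_sum]
  apply Finset.sum_le_sum
  intro j _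
  rw [norm_mul]
  have h3 : ‖d j‖ ≤ C := by rw [Real.norm_eq_abs]; exact hd j
  calc (‖d j‖ * ‖b.repr x j‖)^2 = ‖d j‖^2 * ‖b.repr x j‖^2 := by ring
    _ ≤ C^2 * ‖b.repr x j‖^2 := by
        apply mul_le_mul_of_nonneg_right _ (by positivity)
        exact pow_le_pow_left₀ (norm_nonneg _) h3 2

private lemma clm_eig_apply' {k : ℕ} (W : Matrix (Fin k) (Fin k) ℝ) (hW : W.IsHermitian)
    (i : Fin k) :
    Matrix.toEuclideanCLM (𝕜 := ℝ) W (hW.eigenvectorBasis i) =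
      hW.eigenvalues i • hW.eigenvectorBasis i := by
  apply (WithLp.equiv 2 (Fin k → ℝ)).injective
  ext j
  have h := congrFun (hW.mulVec_eigenvectorBasis i) j
  simpa [Matrix.ofLp_toEuclideanCLM, Matrix.toLin'_apply] using h

private lemma clm_prod_eig' {k : ℕ} (W : Matrix (Fin k) (Fin k) ℝ) (hW : W.IsHermitian)
    (i : Fin k) (s : ℕ) :
    Matrix.toEuclideanCLM (𝕜 := ℝ) (W ^ s * (W - 1)) (hW.eigenvectorBasis i) =
      ((hW.eigenvalues i) ^ s * (hW.eigenvalues i - 1)) • hW.eigenvectorBasis i := by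
  have hS := clm_eig_apply' W hW i
  set S := Matrix.toEuclideanCLM (𝕜 := ℝ) W with hSdef
  have hmap : Matrix.toEuclideanCLM (𝕜 := ℝ) (W ^ s * (W - 1)) = S ^ s * (S - 1) := by
    rw [_root_.map_mul, map_pow, _root_.map_sub, _root_.map_one]
  rw [hmap]
  have hpow : ∀ r : ℕ, (S ^ r) (hW.eigenvectorBasis i) =
      (hW.eigenvalues i) ^ r • hW.eigenvectorBasis i := by
    intro r
    induction r with
    | zero => simp
    | succ r ih =>
      rw [pow_succ', ContinuousLinearMap.mul_apply, ih, _root_.map_smul, hS]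
      module
  rw [ContinuousLinearMap.mul_apply, ContinuousLinearMap.sub_apply, ContinuousLinearMap.one_apply,
    hS, _root_.map_sub, _root_.map_smul, hpow]
  module

/-- The sequence `P` of Definition 1 majorizes the sequence `(x_t)` defined by
the recursion of Proposition 3: `x_t ≤ P(t)` for all `t ≥ 0`. -/
theorem majorizing_sequence_bounds_recursion {m : ℕ}
    (W : Matrix (Fin m) (Fin m) ℝ) (hsym : W.IsSymm)
    (hcol : Matrix.vecMul (fun _ => (1 : ℝ)) W = fun _ => 1)
    (hrow : W.mulVec (fun _ => (1 : ℝ)) = fun _ => 1)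
    (hρ : spectralRadius ℝ (W - avgMat m) < 1)
    (lam2 : ℝ) (hlam2 : lam2 = (spectralRadius ℝ (W - avgMat m)).toReal)
    (lammin : ℝ) (hmem : lammin ∈ spectrum ℝ W)
    (hmin : ∀ μ ∈ spectrum ℝ W, lammin ≤ μ)
    (n : ℕ) (hn : 0 < n) (z₀ : Fin m → ℝ) (zinf : ℝ) (hzinf : zinf = supNorm z₀)
    (x : ℕ → ℝ) (hx0 : 0 < x 0)
    (hx1 : x 1 = zinf ^ 2 * (1 - lammin) ^ 2 + (2 - lammin) ^ 2 * x 0 / (3 * 2 ^ (2 * n)))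
    (hxrec : ∀ t, 1 ≤ t →
      x (t + 1) = zinf ^ 2 * lam2 ^ (2 * t) * (1 - lammin) ^ 2 +
        (1 - lammin) ^ 2 *
          ∑ s ∈ Finset.range t, spNorm (W ^ s * (W - 1)) ^ 2 * x (t - s - 1) / (3 * 2 ^ (2 * n)) +
        (2 - lammin) ^ 2 * x t / (3 * 2 ^ (2 * n)))
    (P : ℕ → ℝ) (hP0 : P 0 = x 0) (hP1 : P 1 = x 1)
    (hPrec : ∀ t, 2 ≤ t →
      P t = zinf ^ 2 * (1 - lammin) ^ 2 * lam2 ^ (2 * (t - 1)) +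
        (1 - lammin) ^ 4 *
          ∑ s ∈ Finset.range (t - 1), lam2 ^ (2 * s) * P (t - 2 - s) / (3 * 2 ^ (2 * n)) +
        (2 - lammin) ^ 2 * P (t - 1) / (3 * 2 ^ (2 * n))) :
    ∀ t, x t ≤ P t := by
  classical
  have hcpos : (0:ℝ) < 3 * 2 ^ (2 * n) := by positivity
  have hW : W.IsHermitian := by
    rw [Matrix.IsHermitian, Matrix.conjTranspose_eq_transpose_of_trivial]; exact hsym
  have hlam2_nonneg : 0 ≤ lam2 := hlam2 ▸ ENNReal.toReal_nonneg
  have hlam2_lt : lam2 < 1 := by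
    rw [hlam2]
    have h := (ENNReal.toReal_lt_toReal (ne_top_of_lt hρ) ENNReal.one_ne_top).mpr hρ
    simpa using h
  -- every eigenvalue of W is 1 or bounded by lam2 in absolute value
  have hkey : ∀ μ ∈ spectrum ℝ W, μ = 1 ∨ |μ| ≤ lam2 := by
    intro μ hμ
    by_cases h1 : μ = 1
    · exact Or.inl h1
    right
    obtain ⟨v, hv0, hv⟩ := (matrix_mem_spectrum_iff' W μ).mp hμ
    have hWcol : ∀ kk, ∑ j, W j kk = 1 := by
      intro kk
      have := congrFun hcol kk
      simpa [Matrix.vecMul, dotProduct] using this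
    have h2 : ∑ j, W.mulVec v j = ∑ kk, v kk := by
      simp only [Matrix.mulVec, dotProduct]
      rw [Finset.sum_comm]
      refine Finset.sum_congr rfl fun kk _ => ?_
      rw [← Finset.sum_mul, hWcol kk, one_mul]
    rw [hv] at h2
    have h3 : ∑ j, (μ • v) j = μ * ∑ j, v j := by
      simp [Finset.mul_sum]
    rw [h3] at h2
    have hS0 : ∑ j, v j = 0 := by
      by_contra hne
      exact h1 (mul_right_cancel₀ hne (by rw [one_mul]; exact h2))
    have havg : (avgMat m).mulVec v = 0 := by
      ext j
      simp [avgMat, Matrix.mulVec, dotProduct, ← Finset.mul_sum, hS0]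
    have hv2 : (W - avgMat m).mulVec v = μ • v := by
      rw [Matrix.sub_mulVec, havg, sub_zero, hv]
    have hspec : μ ∈ spectrum ℝ (W - avgMat m) :=
      (matrix_mem_spectrum_iff' _ _).mpr ⟨v, hv0, hv2⟩
    have h4 : (‖μ‖₊ : ℝ≥0∞) ≤ spectralRadius ℝ (W - avgMat m) := by
      have h4' : (‖μ‖₊ : ℝ≥0∞) ≤ ⨆ k ∈ spectrum ℝ (W - avgMat m), (‖k‖₊ : ℝ≥0∞) :=
        le_iSup₂ (f := fun k _ => ((‖k‖₊ : ℝ≥0∞))) μ hspec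
      exact h4'
    rw [hlam2]
    have h5 := ENNReal.toReal_mono (ne_top_of_lt hρ) h4
    simpa [Real.norm_eq_abs] using h5
  have hlmle : lammin ≤ 1 := by
    rcases hkey lammin hmem with h | h
    · exact h.le
    · exact (le_abs_self lammin).trans (h.trans hlam2_lt.le)
  have h1m : (0:ℝ) ≤ 1 - lammin := by linarith
  have h2l : (0:ℝ) < 2 - lammin := by linarith
  -- the crucial norm bound
  have hnorm : ∀ s : ℕ, spNorm (W ^ s * (W - 1)) ≤ lam2 ^ s * (1 - lammin) := by
    intro s
    have hC : (0:ℝ) ≤ lam2 ^ s * (1 - lammin) :=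
      mul_nonneg (pow_nonneg hlam2_nonneg s) h1m
    refine opNorm_le_of_basis' _ hW.eigenvectorBasis
      (fun i => (hW.eigenvalues i) ^ s * (hW.eigenvalues i - 1))
      (fun i => clm_prod_eig' W hW i s) _ hC ?_
    intro i
    set μ := hW.eigenvalues i with hμdef
    have hμspec : μ ∈ spectrum ℝ W := hW.eigenvalues_mem_spectrum_real i
    show |μ ^ s * (μ - 1)| ≤ lam2 ^ s * (1 - lammin)
    rcases hkey μ hμspec with h | h
    · rw [h]; simpa using hC
    · have hμ1 : μ ≤ 1 := (le_abs_self μ).trans (h.trans hlam2_lt.le)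
      have hμmin : lammin ≤ μ := hmin μ hμspec
      rw [abs_mul, abs_pow]
      have e1 : |μ| ^ s ≤ lam2 ^ s := pow_le_pow_left₀ (abs_nonneg μ) h s
      have e2 : |μ - 1| ≤ 1 - lammin := by
        rw [abs_sub_comm, abs_of_nonneg (by linarith)]
        linarith
      exact mul_le_mul e1 e2 (abs_nonneg _) (pow_nonneg hlam2_nonneg s)
  have hnormnn : ∀ s : ℕ, (0:ℝ) ≤ spNorm (W ^ s * (W - 1)) := fun s => norm_nonneg _
  -- main strong induction
  have key : ∀ t, 0 < x t ∧ x t ≤ P t := by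
    intro t
    induction t using Nat.strong_induction_on with
    | _ t ih =>
      match t with
      | 0 => exact ⟨hx0, by rw [hP0]⟩
      | 1 =>
        have hx1pos : 0 < x 1 := by
          rw [hx1]
          have ha : (0:ℝ) ≤ zinf ^ 2 * (1 - lammin) ^ 2 := by positivity
          have hb : (0:ℝ) < (2 - lammin) ^ 2 * x 0 / (3 * 2 ^ (2 * n)) := by positivity
          linarith
        exact ⟨hx1pos, by rw [hP1]⟩
      | (k+2) =>
        have hxe := hxrec (k+1) (Nat.le_add_left 1 k)
        have hPe := hPrec (k+2) (by omega)
        have e1 : ∀ s : ℕ, k + 1 - s - 1 = k - s := fun s => by omega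
        have e2 : ∀ s : ℕ, k + 2 - 2 - s = k - s := fun s => by omega
        have e3 : k + 2 - 1 = k + 1 := by omega
        have e4 : k + 2 - 2 = k := by omega
        simp only [e1] at hxe
        simp only [e2, e3] at hPe
        -- shorthand facts from the induction hypothesis
        have hxPk : ∀ s ∈ Finset.range (k+1), 0 < x (k - s) ∧ x (k - s) ≤ P (k - s) := by
          intro s hs
          exact ih (k - s) (by omega)
        obtain ⟨hxk1pos, hxk1le⟩ := ih (k+1) (by omega)
        -- positivity of x (k+2)
        have hApos : (0:ℝ) ≤ zinf ^ 2 * lam2 ^ (2 * (k+1)) * (1 - lammin) ^ 2 := by positivity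
        have hBnn : (0:ℝ) ≤ ∑ s ∈ Finset.range (k+1),
            spNorm (W ^ s * (W - 1)) ^ 2 * x (k - s) / (3 * 2 ^ (2 * n)) := by
          apply Finset.sum_nonneg
          intro s hs
          have hxpos := (hxPk s hs).1
          have := hnormnn s
          positivity
        have hCpos : (0:ℝ) < (2 - lammin) ^ 2 * x (k+1) / (3 * 2 ^ (2 * n)) := by positivity
        have hxpos : 0 < x (k+2) := by
          rw [hxe]
          have : (0:ℝ) ≤ (1 - lammin) ^ 2 * ∑ s ∈ Finset.range (k+1),
              spNorm (W ^ s * (W - 1)) ^ 2 * x (k - s) / (3 * 2 ^ (2 * n)) :=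
            mul_nonneg (by positivity) hBnn
          linarith
        refine ⟨hxpos, ?_⟩
        rw [hxe, hPe]
        -- compare the middle sums
        have hterm : ∀ s ∈ Finset.range (k+1),
            spNorm (W ^ s * (W - 1)) ^ 2 * x (k - s) / (3 * 2 ^ (2 * n)) ≤
              (1 - lammin) ^ 2 * (lam2 ^ (2 * s) * P (k - s) / (3 * 2 ^ (2 * n))) := by
          intro s hs
          obtain ⟨hxpos', hxle'⟩ := hxPk s hs
          have hPnn : (0:ℝ) ≤ P (k - s) := (hxpos'.trans_le hxle').le
          have hsq : spNorm (W ^ s * (W - 1)) ^ 2 ≤ (lam2 ^ s * (1 - lammin)) ^ 2 :=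
            pow_le_pow_left₀ (hnormnn s) (hnorm s) 2
          have hrw : (lam2 ^ s * (1 - lammin)) ^ 2 = (1 - lammin) ^ 2 * lam2 ^ (2 * s) := by
            rw [mul_pow, ← pow_mul]
            ring
          calc spNorm (W ^ s * (W - 1)) ^ 2 * x (k - s) / (3 * 2 ^ (2 * n))
              ≤ spNorm (W ^ s * (W - 1)) ^ 2 * P (k - s) / (3 * 2 ^ (2 * n)) := by
                apply div_le_div_of_nonneg_right ?_ hcpos.le |>.trans_eq rfl
                exact mul_le_mul_of_nonneg_left hxle' (by positivity)
            _ ≤ (lam2 ^ s * (1 - lammin)) ^ 2 * P (k - s) / (3 * 2 ^ (2 * n)) := by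
                apply div_le_div_of_nonneg_right ?_ hcpos.le |>.trans_eq rfl
                exact mul_le_mul_of_nonneg_right hsq hPnn
            _ = (1 - lammin) ^ 2 * (lam2 ^ (2 * s) * P (k - s) / (3 * 2 ^ (2 * n))) := by
                rw [hrw]; ring
        have hB : (1 - lammin) ^ 2 * ∑ s ∈ Finset.range (k+1),
              spNorm (W ^ s * (W - 1)) ^ 2 * x (k - s) / (3 * 2 ^ (2 * n)) ≤
            (1 - lammin) ^ 4 * ∑ s ∈ Finset.range (k+1),
              lam2 ^ (2 * s) * P (k - s) / (3 * 2 ^ (2 * n)) := by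
          calc (1 - lammin) ^ 2 * ∑ s ∈ Finset.range (k+1),
                spNorm (W ^ s * (W - 1)) ^ 2 * x (k - s) / (3 * 2 ^ (2 * n))
              ≤ (1 - lammin) ^ 2 * ∑ s ∈ Finset.range (k+1),
                  (1 - lammin) ^ 2 * (lam2 ^ (2 * s) * P (k - s) / (3 * 2 ^ (2 * n))) :=
                mul_le_mul_of_nonneg_left (Finset.sum_le_sum hterm) (by positivity)
            _ = (1 - lammin) ^ 4 * ∑ s ∈ Finset.range (k+1),
                  lam2 ^ (2 * s) * P (k - s) / (3 * 2 ^ (2 * n)) := by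
                rw [← Finset.mul_sum, ← mul_assoc]
                ring
        have hC : (2 - lammin) ^ 2 * x (k+1) / (3 * 2 ^ (2 * n)) ≤
            (2 - lammin) ^ 2 * P (k+1) / (3 * 2 ^ (2 * n)) := by
          apply div_le_div_of_nonneg_right ?_ hcpos.le |>.trans_eq rfl
          exact mul_le_mul_of_nonneg_left hxk1le (by positivity)
        have hA : zinf ^ 2 * lam2 ^ (2 * (k+1)) * (1 - lammin) ^ 2 =
            zinf ^ 2 * (1 - lammin) ^ 2 * lam2 ^ (2 * (k+1)) := by ring
        linarith
  intro t
  exact (key t).2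
end

section
/- Let b > 0, c > 0 and γ ∈ (0, 1). Then (c + γ + √((c−γ)² + 4b))/2 < 1 if and only if b/(1−γ) + c < 1. In particular, with c = (2−λ_min)²/(3·2^{2n}), b = (1−λ_min)⁴/(3·2^{2n}) and γ = λ₂² for λ₂ ∈ (0,1), the largest eigenvalue of the companion matrix A = [[c+γ, b−cγ],[1, 0]] is strictly less than 1 in absolute value if and only if (1−λ_min)⁴/(1−λ₂²) + (2−λ_min)² < 3·2^{2n}. -/
lemma key_iff (b c γ : ℝ) (hb : 0 ≤ b) (hc : 0 ≤ c) (hγ : γ ∈ Set.Ioo (0 : ℝ) 1) :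
    ((c + γ + Real.sqrt ((c - γ) ^ 2 + 4 * b)) / 2 < 1 ↔ b / (1 - γ) + c < 1) := by
  obtain ⟨hγ0, hγ1⟩ := hγ
  have h1γ : 0 < 1 - γ := by linarith
  constructor
  · intro h
    have hs : Real.sqrt ((c - γ) ^ 2 + 4 * b) < 2 - (c + γ) := by linarith
    have hpos : 0 < 2 - (c + γ) := lt_of_le_of_lt (Real.sqrt_nonneg _) hs
    have hsq : (c - γ) ^ 2 + 4 * b < (2 - (c + γ)) ^ 2 := (Real.sqrt_lt' hpos).mp hs
    have hb' : b < (1 - c) * (1 - γ) := by nlinarith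
    have := (div_lt_iff₀ h1γ).mpr hb'
    linarith
  · intro h
    have hb' : b < (1 - c) * (1 - γ) := by
      have := (div_lt_iff₀ h1γ).mp (by linarith : b / (1 - γ) < 1 - c)
      linarith
    have hc1 : c < 1 := by nlinarith
    have hpos : 0 < 2 - (c + γ) := by linarith
    have hsq : (c - γ) ^ 2 + 4 * b < (2 - (c + γ)) ^ 2 := by nlinarith
    have := (Real.sqrt_lt' hpos).mpr hsq
    linarith

/-- For `b > 0`, `c > 0` and `γ ∈ (0,1)`,
`(c + γ + √((c−γ)² + 4b))/2 < 1 ↔ b/(1−γ) + c < 1`.  In particular, with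
`c = (2−λ_min)²/(3·2^{2n})`, `b = (1−λ_min)⁴/(3·2^{2n})` and `γ = λ₂²` for `λ₂ ∈ (0,1)`, the
largest eigenvalue `(c+γ+√((c−γ)²+4b))/2` of the companion matrix `A = [[c+γ, b−cγ],[1,0]]` is
strictly less than `1` in absolute value iff `(1−λ_min)⁴/(1−λ₂²) + (2−λ_min)² < 3·2^{2n}`. -/
theorem companion_eigenvalue_lt_one_iff :
    (∀ b c γ : ℝ, 0 < b → 0 < c → γ ∈ Set.Ioo (0 : ℝ) 1 →
      ((c + γ + Real.sqrt ((c - γ) ^ 2 + 4 * b)) / 2 < 1 ↔ b / (1 - γ) + c < 1)) ∧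
    (∀ (lammin lam2 : ℝ) (n : ℕ), 0 < n → lam2 ∈ Set.Ioo (0 : ℝ) 1 →
      (|((2 - lammin) ^ 2 / (3 * 2 ^ (2 * n)) + lam2 ^ 2 +
          Real.sqrt (((2 - lammin) ^ 2 / (3 * 2 ^ (2 * n)) - lam2 ^ 2) ^ 2 +
            4 * ((1 - lammin) ^ 4 / (3 * 2 ^ (2 * n))))) / 2| < 1 ↔
        (1 - lammin) ^ 4 / (1 - lam2 ^ 2) + (2 - lammin) ^ 2 < 3 * 2 ^ (2 * n))) := by
  constructor
  · intro b c γ hb hc hγ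
    exact key_iff b c γ hb.le hc.le hγ
  · intro lammin lam2 n hn hlam2
    obtain ⟨h0, h1⟩ := hlam2
    set D : ℝ := 3 * 2 ^ (2 * n) with hD
    have hDpos : (0 : ℝ) < D := by positivity
    have hc : (0 : ℝ) ≤ (2 - lammin) ^ 2 / D := by positivity
    have hb : (0 : ℝ) ≤ (1 - lammin) ^ 4 / D := by positivity
    have hγ : lam2 ^ 2 ∈ Set.Ioo (0 : ℝ) 1 := ⟨by positivity, by nlinarith⟩
    have habs : 0 ≤ ((2 - lammin) ^ 2 / D + lam2 ^ 2 +
        Real.sqrt (((2 - lammin) ^ 2 / D - lam2 ^ 2) ^ 2 +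
          4 * ((1 - lammin) ^ 4 / D))) / 2 := by
      have := Real.sqrt_nonneg (((2 - lammin) ^ 2 / D - lam2 ^ 2) ^ 2 +
          4 * ((1 - lammin) ^ 4 / D))
      have h2 : (0:ℝ) < lam2 ^ 2 := hγ.1
      linarith
    rw [abs_of_nonneg habs, key_iff _ _ _ hb hc hγ]
    have heq : ((1 - lammin) ^ 4 / D) / (1 - lam2 ^ 2) + (2 - lammin) ^ 2 / D =
        ((1 - lammin) ^ 4 / (1 - lam2 ^ 2) + (2 - lammin) ^ 2) / D := by
      ring
    rw [heq, div_lt_one hDpos]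
end
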